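/- arXiv:2307.09131 — 2 statements merged into one kernel-verified Lean document; each statement's English description precedes it below -/
import Mathlib

section
/- (Hlawka–Koksma inequality in dimension 2.) Let f : [0,1]^2 → ℝ have continuous mixed partial derivatives of order one (i.e. ∂f/∂u, ∂f/∂v and ∂²f/∂u∂v exist and are continuous on [0,1]^2), and define the norm ‖f‖_{2,1} = |f(1,1)| + ∫_0^1 |∂f/∂u (u,1)| du + ∫_0^1 |∂f/∂v (1,v)| dv + ∫_0^1 ∫_0^1 |∂²f/∂u∂v (u,v)| du dv. Then for every finite sequence x^(1), …, x^(N) of points in [0,1)^2, | (1/N) Σ_{n=1}^{N} f(x^(n)) − ∫_{[0,1]^2} f(ν) dν | ≤ ‖f‖_{2,1} · D*_N(S). -/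
open Filter MeasureTheory Set
open scoped Classical

/-- The star discrepancy of a finite sequence `x⁽¹⁾, …, x⁽ᴺ⁾` of points of `[0,1)²`:
`D*_N(S) = sup_{y ∈ [0,1)²} | A([0,y), S|_N)/N − λ₂([0,y)) |`. -/
noncomputable def starDiscrepancy2 {N : ℕ} (x : Fin N → ℝ × ℝ) : ℝ :=
  ⨆ y : {y : ℝ × ℝ // y.1 ∈ Set.Ico (0 : ℝ) 1 ∧ y.2 ∈ Set.Ico (0 : ℝ) 1},
    |((Finset.univ.filter (fun n : Fin N =>
          (x n).1 ∈ Set.Ico (0 : ℝ) (y.1).1 ∧ (x n).2 ∈ Set.Ico (0 : ℝ) (y.1).2)).card : ℝ)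
        / N - (y.1).1 * (y.1).2|


private lemma hk_ftc (g g' : ℝ → ℝ)
    (hd : ∀ t ∈ Icc (0:ℝ) 1, HasDerivWithinAt g (g' t) (Icc 0 1) t)
    (hc : ContinuousOn g' (Icc 0 1)) {a : ℝ} (ha : a ∈ Icc (0:ℝ) 1) :
    ∫ u in a..1, g' u = g 1 - g a := by
  have hsub : Icc a 1 ⊆ Icc (0:ℝ) 1 := Icc_subset_Icc ha.1 le_rfl
  apply intervalIntegral.integral_eq_sub_of_hasDeriv_right_of_le ha.2
  · exact fun t ht => ((hd t (hsub ht)).continuousWithinAt).mono hsub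
  · intro t ht
    exact (hd t ⟨le_trans ha.1 ht.1.le, ht.2.le⟩).mono_of_mem_nhdsWithin
      (Icc_mem_nhdsGT_of_mem ⟨le_trans ha.1 ht.1.le, ht.2⟩)
  · exact ContinuousOn.intervalIntegrable (by rw [Set.uIcc_of_le ha.2]; exact hc.mono hsub)


private lemma hk_discr_nonneg {N : ℕ} (x : Fin N → ℝ × ℝ) : 0 ≤ starDiscrepancy2 x :=
  Real.iSup_nonneg fun _ => abs_nonneg _

private lemma hk_discr_bound {N : ℕ} (hN : 0 < N) (x : Fin N → ℝ × ℝ)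
    (hx : ∀ n, (x n).1 ∈ Set.Ico (0 : ℝ) 1 ∧ (x n).2 ∈ Set.Ico (0 : ℝ) 1)
    {u v : ℝ} (hu : u ∈ Set.Icc (0:ℝ) 1) (hv : v ∈ Set.Icc (0:ℝ) 1) :
    |((Finset.univ.filter (fun n : Fin N =>
          (x n).1 ∈ Set.Ico (0 : ℝ) u ∧ (x n).2 ∈ Set.Ico (0 : ℝ) v)).card : ℝ) / N - u * v|
      ≤ starDiscrepancy2 x := by
  have hNpos : (0:ℝ) < N := by exact_mod_cast hN
  have hbdd : BddAbove (Set.range fun y : {y : ℝ × ℝ // y.1 ∈ Set.Ico (0 : ℝ) 1 ∧ y.2 ∈ Set.Ico (0 : ℝ) 1} =>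
      |((Finset.univ.filter (fun n : Fin N =>
          (x n).1 ∈ Set.Ico (0 : ℝ) (y.1).1 ∧ (x n).2 ∈ Set.Ico (0 : ℝ) (y.1).2)).card : ℝ)
        / N - (y.1).1 * (y.1).2|) := by
    refine ⟨2, ?_⟩
    rintro _ ⟨y, rfl⟩
    have h1 : ((Finset.univ.filter (fun n : Fin N =>
          (x n).1 ∈ Set.Ico (0 : ℝ) (y.1).1 ∧ (x n).2 ∈ Set.Ico (0 : ℝ) (y.1).2)).card : ℝ) ≤ N := by
      exact_mod_cast (Finset.card_filter_le _ _).trans_eq (Finset.card_univ.trans (Fintype.card_fin N))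
    have h2 : (0:ℝ) ≤ (y.1).1 * (y.1).2 := mul_nonneg y.2.1.1 y.2.2.1
    have h3 : (y.1).1 * (y.1).2 ≤ 1 := mul_le_one₀ y.2.1.2.le y.2.2.1 y.2.2.2.le
    have h5 : (0:ℝ) ≤ ((Finset.univ.filter (fun n : Fin N =>
          (x n).1 ∈ Set.Ico (0 : ℝ) (y.1).1 ∧ (x n).2 ∈ Set.Ico (0 : ℝ) (y.1).2)).card : ℝ) / N :=
      div_nonneg (Nat.cast_nonneg _) hNpos.le
    rw [abs_sub_le_iff]
    constructor
    · calc _ ≤ (1:ℝ) - 0 := by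
            refine sub_le_sub ?_ h2
            rw [div_le_one hNpos]; exact h1
        _ ≤ 2 := by norm_num
    · nlinarith
  refine le_of_forall_pos_le_add fun ε hε => ?_
  haveI : Nonempty (Fin N) := ⟨⟨0, hN⟩⟩
  set c : ℝ := Finset.univ.sup' Finset.univ_nonempty (fun n : Fin N => max (x n).1 (x n).2) with hc
  have hc1 : c < 1 := by
    rw [hc, Finset.sup'_lt_iff]
    exact fun n _ => max_lt (hx n).1.2 (hx n).2.2
  have hc0 : (0:ℝ) ≤ c := by
    refine le_trans (hx ⟨0, hN⟩).1.1 ?_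
    exact le_trans (le_max_left _ _) (Finset.le_sup' (f := fun n : Fin N => max (x n).1 (x n).2) (Finset.mem_univ ⟨0, hN⟩))
  set t : ℝ := max ((c+1)/2) (1 - ε/2) with htdef
  have htc : c < t := lt_of_lt_of_le (by linarith) (le_max_left _ _)
  have ht1 : t < 1 := max_lt (by linarith) (by linarith)
  have ht0 : (0:ℝ) ≤ t := le_trans hc0 htc.le
  have h1t : 1 - t ≤ ε/2 := by
    have := le_max_right ((c+1)/2) (1 - ε/2); linarith
  have hymem : (min u t) ∈ Set.Ico (0:ℝ) 1 ∧ (min v t) ∈ Set.Ico (0:ℝ) 1 :=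
    ⟨⟨le_min hu.1 ht0, lt_of_le_of_lt (min_le_right _ _) ht1⟩,
     ⟨le_min hv.1 ht0, lt_of_le_of_lt (min_le_right _ _) ht1⟩⟩
  have hfe : Finset.univ.filter (fun n : Fin N =>
        (x n).1 ∈ Set.Ico (0 : ℝ) (min u t) ∧ (x n).2 ∈ Set.Ico (0 : ℝ) (min v t))
      = Finset.univ.filter (fun n : Fin N =>
        (x n).1 ∈ Set.Ico (0 : ℝ) u ∧ (x n).2 ∈ Set.Ico (0 : ℝ) v) := by
    apply Finset.filter_congr
    intro n _
    have h1 : (x n).1 ≤ c := le_trans (le_max_left _ _) (Finset.le_sup' (f := fun n : Fin N => max (x n).1 (x n).2) (Finset.mem_univ n))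
    have h2 : (x n).2 ≤ c := le_trans (le_max_right _ _) (Finset.le_sup' (f := fun n : Fin N => max (x n).1 (x n).2) (Finset.mem_univ n))
    constructor
    · rintro ⟨⟨ha0, ha⟩, hb0, hb⟩
      exact ⟨⟨ha0, ha.trans_le (min_le_left _ _)⟩, ⟨hb0, hb.trans_le (min_le_left _ _)⟩⟩
    · rintro ⟨⟨ha0, ha⟩, hb0, hb⟩
      exact ⟨⟨ha0, lt_min ha (h1.trans_lt htc)⟩, ⟨hb0, lt_min hb (h2.trans_lt htc)⟩⟩
  have hkey : |((Finset.univ.filter (fun n : Fin N =>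
        (x n).1 ∈ Set.Ico (0 : ℝ) (min u t) ∧ (x n).2 ∈ Set.Ico (0 : ℝ) (min v t))).card : ℝ)
        / N - (min u t) * (min v t)| ≤ starDiscrepancy2 x :=
    le_ciSup hbdd (⟨(min u t, min v t), hymem⟩ :
      {y : ℝ × ℝ // y.1 ∈ Set.Ico (0 : ℝ) 1 ∧ y.2 ∈ Set.Ico (0 : ℝ) 1})
  rw [hfe] at hkey
  have e1 : u - min u t ≤ 1 - t := by
    rcases le_total u t with h | h
    · rw [min_eq_left h]; linarith
    · rw [min_eq_right h]; linarith [hu.2]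
  have e2 : v - min v t ≤ 1 - t := by
    rcases le_total v t with h | h
    · rw [min_eq_left h]; linarith
    · rw [min_eq_right h]; linarith [hv.2]
  have hm1u : min u t ≤ u := min_le_left _ _
  have hm2v : min v t ≤ v := min_le_left _ _
  have hm10 : 0 ≤ min u t := le_min hu.1 ht0
  have hm20 : 0 ≤ min v t := le_min hv.1 ht0
  have habs : |min u t * min v t - u * v| ≤ ε := by
    rw [abs_le]
    constructor
    · nlinarith [hu.2, hv.2]
    · nlinarith [hu.2, hv.2]
  calc |((Finset.univ.filter (fun n : Fin N =>
        (x n).1 ∈ Set.Ico (0 : ℝ) u ∧ (x n).2 ∈ Set.Ico (0 : ℝ) v)).card : ℝ) / N - u * v|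
      ≤ |((Finset.univ.filter (fun n : Fin N =>
        (x n).1 ∈ Set.Ico (0 : ℝ) u ∧ (x n).2 ∈ Set.Ico (0 : ℝ) v)).card : ℝ) / N
          - (min u t) * (min v t)| + |min u t * min v t - u * v| := by
        exact abs_sub_le _ _ _
    _ ≤ starDiscrepancy2 x + ε := add_le_add hkey habs

private noncomputable def hkInd (a t : ℝ) : ℝ := if a < t then 1 else 0

private lemma hk_eval {u : ℝ} (hu : u ∈ Set.Ioc (0:ℝ) 1) :
    ∫ a in Set.Ioc (0:ℝ) 1, hkInd a u = u := by
  have h1 : (fun a => hkInd a u) = (Set.Iio u).indicator (fun _ => (1:ℝ)) := by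
    funext a; simp [hkInd, Set.indicator, Set.mem_Iio]
  rw [h1, integral_indicator_const _ measurableSet_Iio, measureReal_def, Measure.restrict_apply measurableSet_Iio]
  have h2 : Set.Iio u ∩ Set.Ioc 0 1 = Set.Ioo 0 u := by
    ext z
    constructor
    · rintro ⟨h1, h2, h3⟩; exact ⟨h2, h1⟩
    · rintro ⟨h2, h1⟩; exact ⟨h1, h2, le_of_lt (lt_of_lt_of_le h1 hu.2)⟩
  rw [h2, Real.volume_Ioo, smul_eq_mul, mul_one, sub_zero, ENNReal.toReal_ofReal hu.1.le]

private lemma hk_iok (g : ℝ → ℝ) {a : ℝ} (ha : a ∈ Set.Icc (0:ℝ) 1) :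
    ∫ u in a..1, g u = ∫ u in Set.Ioc (0:ℝ) 1, hkInd a u * g u := by
  have h1 : (fun u => hkInd a u * g u) = (Set.Ioi a).indicator g := by
    funext u; simp [hkInd, Set.indicator, Set.mem_Ioi]
  rw [intervalIntegral.integral_of_le ha.2, h1, setIntegral_indicator measurableSet_Ioi]
  have h3 : Set.Ioc (0:ℝ) 1 ∩ Set.Ioi a = Set.Ioc a 1 := by
    ext z
    constructor
    · rintro ⟨⟨h1, h2⟩, h3⟩; exact ⟨h3, h2⟩
    · rintro ⟨h1, h2⟩; exact ⟨⟨lt_of_le_of_lt ha.1 h1, h2⟩, h1⟩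
  rw [h3]

private lemma hk_prod_eq :
    (volume.restrict (Set.Ioc (0:ℝ) 1)).prod (volume.restrict (Set.Ioc (0:ℝ) 1))
    = (volume : Measure (ℝ × ℝ)).restrict (Set.Ioc (0:ℝ) 1 ×ˢ Set.Ioc (0:ℝ) 1) := by
  rw [Measure.prod_restrict, ← Measure.volume_eq_prod]

private lemma hk_prod_eq4 :
    ((volume : Measure (ℝ × ℝ)).restrict (Set.Ioc (0:ℝ) 1 ×ˢ Set.Ioc (0:ℝ) 1)).prod
      ((volume : Measure (ℝ × ℝ)).restrict (Set.Ioc (0:ℝ) 1 ×ˢ Set.Ioc (0:ℝ) 1))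
    = (volume : Measure ((ℝ × ℝ) × (ℝ × ℝ))).restrict
        ((Set.Ioc (0:ℝ) 1 ×ˢ Set.Ioc (0:ℝ) 1) ×ˢ (Set.Ioc (0:ℝ) 1 ×ˢ Set.Ioc (0:ℝ) 1)) := by
  rw [Measure.prod_restrict, ← Measure.volume_eq_prod]

private lemma hk_int_gen {α : Type*} [MeasurableSpace α] {m : Measure α} {s : Set α}
    (hfin : m s ≠ ⊤) (hs : MeasurableSet s) {g : α → ℝ} {C : ℝ}
    (hm : AEStronglyMeasurable g (m.restrict s)) (hb : ∀ u ∈ s, |g u| ≤ C) :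
    Integrable g (m.restrict s) := by
  haveI : IsFiniteMeasure (m.restrict s) :=
    ⟨by rw [Measure.restrict_apply_univ]; exact lt_top_iff_ne_top.2 hfin⟩
  refine ⟨hm, HasFiniteIntegral.of_bounded (C := C) ?_⟩
  refine (ae_restrict_iff' hs).2 (ae_of_all _ fun u hu => ?_)
  simpa [Real.norm_eq_abs] using hb u hu

private lemma hk_vol_Ioc_ne_top : (volume : Measure ℝ) (Set.Ioc (0:ℝ) 1) ≠ ⊤ := by
  simp [Real.volume_Ioc]

private lemma hk_vol_S_ne_top :
    (volume : Measure (ℝ × ℝ)) (Set.Ioc (0:ℝ) 1 ×ˢ Set.Ioc (0:ℝ) 1) ≠ ⊤ := by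
  rw [Measure.volume_eq_prod, Measure.prod_prod]
  simp [Real.volume_Ioc]

private lemma hk_vol_SS_ne_top :
    (volume : Measure ((ℝ × ℝ) × (ℝ × ℝ)))
      ((Set.Ioc (0:ℝ) 1 ×ˢ Set.Ioc (0:ℝ) 1) ×ˢ (Set.Ioc (0:ℝ) 1 ×ˢ Set.Ioc (0:ℝ) 1)) ≠ ⊤ := by
  rw [Measure.volume_eq_prod, Measure.prod_prod]
  exact ENNReal.mul_ne_top hk_vol_S_ne_top hk_vol_S_ne_top

private lemma hk_vol_Ioc_univ :
    ((volume : Measure ℝ).restrict (Set.Ioc (0:ℝ) 1) Set.univ).toReal = 1 := by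
  rw [Measure.restrict_apply_univ]; simp [Real.volume_Ioc]

private lemma hk_vol_S_univ :
    (((volume : Measure (ℝ × ℝ)).restrict (Set.Ioc (0:ℝ) 1 ×ˢ Set.Ioc (0:ℝ) 1)) Set.univ).toReal
      = 1 := by
  rw [Measure.restrict_apply_univ, Measure.volume_eq_prod, Measure.prod_prod]
  simp [Real.volume_Ioc]

private lemma hk_ind_meas2 : Measurable (fun p : ℝ × ℝ => hkInd p.1 p.2) := by
  have : (fun p : ℝ × ℝ => hkInd p.1 p.2) = fun p : ℝ × ℝ => if p.1 < p.2 then (1:ℝ) else 0 := rfl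
  rw [this]
  exact Measurable.ite (measurableSet_lt measurable_fst measurable_snd)
    measurable_const measurable_const

private lemma hk_ind_meas_right (a : ℝ) : Measurable (fun t : ℝ => hkInd a t) := by
  have : (fun t : ℝ => hkInd a t) = fun t : ℝ => if a < t then (1:ℝ) else 0 := rfl
  rw [this]
  exact Measurable.ite (measurableSet_lt measurable_const measurable_id) measurable_const measurable_const

private lemma hk_ibp (g g' : ℝ → ℝ)
    (hd : ∀ t ∈ Set.Icc (0:ℝ) 1, HasDerivWithinAt g (g' t) (Set.Icc 0 1) t)
    (hc : ContinuousOn g' (Set.Icc 0 1)) :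
    ∫ a in Set.Ioc (0:ℝ) 1, g a = g 1 - ∫ u in Set.Ioc (0:ℝ) 1, u * g' u := by
  obtain ⟨C, hC⟩ := isCompact_Icc.exists_bound_of_continuousOn hc
  have hC0 : 0 ≤ C := le_trans (norm_nonneg (g' 0)) (hC 0 ⟨le_rfl, zero_le_one⟩)
  have hg'S : AEStronglyMeasurable (fun p : ℝ × ℝ => g' p.2)
      ((volume : Measure (ℝ × ℝ)).restrict (Set.Ioc (0:ℝ) 1 ×ˢ Set.Ioc (0:ℝ) 1)) := by
    refine ContinuousOn.aestronglyMeasurable ?_ (measurableSet_Ioc.prod measurableSet_Ioc)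
    exact (hc.mono Set.Ioc_subset_Icc_self).comp continuous_snd.continuousOn fun p hp => hp.2
  have hFint : Integrable (fun p : ℝ × ℝ => hkInd p.1 p.2 * g' p.2)
      ((volume.restrict (Set.Ioc (0:ℝ) 1)).prod (volume.restrict (Set.Ioc (0:ℝ) 1))) := by
    rw [hk_prod_eq]
    refine hk_int_gen hk_vol_S_ne_top (measurableSet_Ioc.prod measurableSet_Ioc)
      (hk_ind_meas2.aestronglyMeasurable.mul hg'S) (C := C) fun p hp => ?_
    rw [abs_mul]
    have h1 : |hkInd p.1 p.2| ≤ 1 := by unfold hkInd; split <;> norm_num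
    have h2 : |g' p.2| ≤ C := by
      have := hC p.2 (Set.Ioc_subset_Icc_self hp.2)
      rwa [Real.norm_eq_abs] at this
    nlinarith [abs_nonneg (g' p.2)]
  have h1 : ∀ a ∈ Set.Ioc (0:ℝ) 1,
      g a = g 1 - ∫ u in Set.Ioc (0:ℝ) 1, hkInd a u * g' u := by
    intro a ha
    have h2 := hk_ftc g g' hd hc (Set.Ioc_subset_Icc_self ha)
    rw [hk_iok g' (Set.Ioc_subset_Icc_self ha)] at h2
    linarith
  rw [setIntegral_congr_fun measurableSet_Ioc h1]
  have hG : Integrable (fun a => ∫ u in Set.Ioc (0:ℝ) 1, hkInd a u * g' u)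
      (volume.restrict (Set.Ioc (0:ℝ) 1)) := hFint.integral_prod_left
  rw [integral_sub (integrable_const _) hG, integral_const, measureReal_def, hk_vol_Ioc_univ, one_smul]
  congr 1
  have hswap := integral_integral_swap (f := fun a u => hkInd a u * g' u)
      (μ := volume.restrict (Set.Ioc (0:ℝ) 1)) (ν := volume.restrict (Set.Ioc (0:ℝ) 1)) hFint
  rw [hswap]
  refine setIntegral_congr_fun measurableSet_Ioc fun u hu => ?_
  rw [integral_mul_const, hk_eval hu]

private lemma hk_fst (g : ℝ → ℝ) :
    (∫ p in Set.Ioc (0:ℝ) 1 ×ˢ Set.Ioc (0:ℝ) 1, g p.1) = ∫ a in Set.Ioc (0:ℝ) 1, g a := by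
  rw [← hk_prod_eq]
  have h := integral_prod_mul (μ := volume.restrict (Set.Ioc (0:ℝ) 1))
    (ν := volume.restrict (Set.Ioc (0:ℝ) 1)) (f := g) (g := fun _ => (1:ℝ))
  simp only [mul_one] at h
  rw [h, MeasureTheory.integral_const, measureReal_def, hk_vol_Ioc_univ, one_smul, mul_one]

private lemma hk_snd (g : ℝ → ℝ) :
    (∫ p in Set.Ioc (0:ℝ) 1 ×ˢ Set.Ioc (0:ℝ) 1, g p.2) = ∫ b in Set.Ioc (0:ℝ) 1, g b := by
  rw [← hk_prod_eq]
  have h := integral_prod_mul (μ := volume.restrict (Set.Ioc (0:ℝ) 1))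
    (ν := volume.restrict (Set.Ioc (0:ℝ) 1)) (f := fun _ => (1:ℝ)) (g := g)
  simp only [one_mul] at h
  rw [h, MeasureTheory.integral_const, measureReal_def, hk_vol_Ioc_univ, one_smul, one_mul]

set_option maxHeartbeats 3000000 in
/-- **Hlawka–Koksma inequality in dimension 2.** If `f : [0,1]² → ℝ` has continuous mixed
partial derivatives of order one (`fu = ∂f/∂u`, `fv = ∂f/∂v`, `fuv = ∂²f/∂u∂v` exist and are
continuous on `[0,1]²`), then for every finite sequence of points of `[0,1)²` the integration
error of the averages of `f` is bounded by `‖f‖_{2,1}` times the star discrepancy, where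
`‖f‖_{2,1} = |f(1,1)| + ∫₀¹ |∂f/∂u(u,1)| du + ∫₀¹ |∂f/∂v(1,v)| dv + ∫₀¹∫₀¹ |∂²f/∂u∂v| du dv`. -/
theorem hlawka_koksma_inequality_dim2
    (f fu fv fuv : ℝ → ℝ → ℝ)
    (hfu : ∀ v ∈ Set.Icc (0 : ℝ) 1, ∀ u ∈ Set.Icc (0 : ℝ) 1,
      HasDerivWithinAt (fun t => f t v) (fu u v) (Set.Icc 0 1) u)
    (hfv : ∀ u ∈ Set.Icc (0 : ℝ) 1, ∀ v ∈ Set.Icc (0 : ℝ) 1,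
      HasDerivWithinAt (fun t => f u t) (fv u v) (Set.Icc 0 1) v)
    (hfuv : ∀ u ∈ Set.Icc (0 : ℝ) 1, ∀ v ∈ Set.Icc (0 : ℝ) 1,
      HasDerivWithinAt (fun t => fu u t) (fuv u v) (Set.Icc 0 1) v)
    (hcu : ContinuousOn (fun p : ℝ × ℝ => fu p.1 p.2) (Set.Icc 0 1 ×ˢ Set.Icc 0 1))
    (hcv : ContinuousOn (fun p : ℝ × ℝ => fv p.1 p.2) (Set.Icc 0 1 ×ˢ Set.Icc 0 1))
    (hcuv : ContinuousOn (fun p : ℝ × ℝ => fuv p.1 p.2) (Set.Icc 0 1 ×ˢ Set.Icc 0 1))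
    (N : ℕ) (hN : 0 < N) (x : Fin N → ℝ × ℝ)
    (hx : ∀ n, (x n).1 ∈ Set.Ico (0 : ℝ) 1 ∧ (x n).2 ∈ Set.Ico (0 : ℝ) 1) :
    |(∑ n, f (x n).1 (x n).2) / N - ∫ u in (0:ℝ)..1, ∫ v in (0:ℝ)..1, f u v|
      ≤ (|f 1 1| + (∫ u in (0:ℝ)..1, |fu u 1|) + (∫ v in (0:ℝ)..1, |fv 1 v|)
          + ∫ u in (0:ℝ)..1, ∫ v in (0:ℝ)..1, |fuv u v|)
        * starDiscrepancy2 x := by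

  classical
  have hone : (1:ℝ) ∈ Icc (0:ℝ) 1 := ⟨zero_le_one, le_rfl⟩
  have hIcc : Ioc (0:ℝ) 1 ⊆ Icc (0:ℝ) 1 := Ioc_subset_Icc_self
  have hSIcc : (Ioc (0:ℝ) 1 ×ˢ Ioc (0:ℝ) 1) ⊆ (Icc (0:ℝ) 1 ×ˢ Icc (0:ℝ) 1) :=
    Set.prod_mono hIcc hIcc
  have hmS : MeasurableSet (Ioc (0:ℝ) 1 ×ˢ Ioc (0:ℝ) 1) :=
    measurableSet_Ioc.prod measurableSet_Ioc
  have hNne : (N:ℝ) ≠ 0 := Nat.cast_ne_zero.2 hN.ne'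
  have hxI : ∀ n, (x n).1 ∈ Icc (0:ℝ) 1 ∧ (x n).2 ∈ Icc (0:ℝ) 1 :=
    fun n => ⟨Ico_subset_Icc_self (hx n).1, Ico_subset_Icc_self (hx n).2⟩
  -- continuity of slices
  have hcg1 : ContinuousOn (fun u => fu u 1) (Icc (0:ℝ) 1) :=
    hcu.comp ((continuous_id.prodMk continuous_const).continuousOn) (fun u hu => ⟨hu, hone⟩)
  have hcg2 : ContinuousOn (fun v => fv 1 v) (Icc (0:ℝ) 1) :=
    hcv.comp ((continuous_const.prodMk continuous_id).continuousOn) (fun v hv => ⟨hone, hv⟩)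
  have hcfuB : ∀ b ∈ Icc (0:ℝ) 1, ContinuousOn (fun u => fu u b) (Icc (0:ℝ) 1) := fun b hb =>
    hcu.comp ((continuous_id.prodMk continuous_const).continuousOn) (fun u hu => ⟨hu, hb⟩)
  have hcfvA : ∀ a ∈ Icc (0:ℝ) 1, ContinuousOn (fun v => fv a v) (Icc (0:ℝ) 1) := fun a ha =>
    hcv.comp ((continuous_const.prodMk continuous_id).continuousOn) (fun v hv => ⟨ha, hv⟩)
  have hcfuvA : ∀ a ∈ Icc (0:ℝ) 1, ContinuousOn (fun v => fuv a v) (Icc (0:ℝ) 1) := fun a ha =>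
    hcuv.comp ((continuous_const.prodMk continuous_id).continuousOn) (fun v hv => ⟨ha, hv⟩)
  have hcf1 : ContinuousOn (fun a => f a 1) (Icc (0:ℝ) 1) :=
    fun a ha => (hfu 1 hone a ha).continuousWithinAt
  have hcf2 : ContinuousOn (fun b => f 1 b) (Icc (0:ℝ) 1) :=
    fun b hb => (hfv 1 hone b hb).continuousWithinAt
  -- bounds
  obtain ⟨C1, hC1⟩ := ((isCompact_Icc : IsCompact (Icc (0:ℝ) 1)).prod (isCompact_Icc : IsCompact (Icc (0:ℝ) 1))).exists_bound_of_continuousOn hcu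
  obtain ⟨C2, hC2⟩ := ((isCompact_Icc : IsCompact (Icc (0:ℝ) 1)).prod (isCompact_Icc : IsCompact (Icc (0:ℝ) 1))).exists_bound_of_continuousOn hcv
  obtain ⟨C3, hC3⟩ := ((isCompact_Icc : IsCompact (Icc (0:ℝ) 1)).prod (isCompact_Icc : IsCompact (Icc (0:ℝ) 1))).exists_bound_of_continuousOn hcuv
  have hC10 : 0 ≤ C1 := le_trans (norm_nonneg _) (hC1 (1,1) ⟨hone, hone⟩)
  have hC20 : 0 ≤ C2 := le_trans (norm_nonneg _) (hC2 (1,1) ⟨hone, hone⟩)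
  have hC30 : 0 ≤ C3 := le_trans (norm_nonneg _) (hC3 (1,1) ⟨hone, hone⟩)
  -- FTC identities
  have h1 : ∀ b ∈ Icc (0:ℝ) 1, ∀ a ∈ Icc (0:ℝ) 1, (∫ u in a..1, fu u b) = f 1 b - f a b :=
    fun b hb a ha => hk_ftc _ _ (hfu b hb) (hcfuB b hb) ha
  have h2 : ∀ a ∈ Icc (0:ℝ) 1, ∀ b ∈ Icc (0:ℝ) 1, (∫ v in b..1, fv a v) = f a 1 - f a b :=
    fun a ha b hb => hk_ftc _ _ (hfv a ha) (hcfvA a ha) hb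
  have h3 : ∀ a ∈ Icc (0:ℝ) 1, ∀ b ∈ Icc (0:ℝ) 1, (∫ v in b..1, fuv a v) = fu a 1 - fu a b :=
    fun a ha b hb => hk_ftc _ _ (hfuv a ha) (hcfuvA a ha) hb
  have hII : ∀ b ∈ Icc (0:ℝ) 1, ∀ a ∈ Icc (0:ℝ) 1, ∀ a' ∈ Icc (0:ℝ) 1,
      IntervalIntegrable (fun u => fu u b) volume a a' := fun b hb a ha a' ha' =>
    ContinuousOn.intervalIntegrable ((hcfuB b hb).mono (uIcc_subset_Icc ha ha'))
  have hIIv : ∀ a ∈ Icc (0:ℝ) 1, ∀ b ∈ Icc (0:ℝ) 1, ∀ b' ∈ Icc (0:ℝ) 1,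
      IntervalIntegrable (fun v => fv a v) volume b b' := fun a ha b hb b' hb' =>
    ContinuousOn.intervalIntegrable ((hcfvA a ha).mono (uIcc_subset_Icc hb hb'))
  have h4 : ∀ a ∈ Icc (0:ℝ) 1, ∀ b ∈ Icc (0:ℝ) 1,
      (∫ u in a..1, ∫ v in b..1, fuv u v) = (f 1 1 - f a 1) - (f 1 b - f a b) := by
    intro a ha b hb
    have e1 : EqOn (fun u => ∫ v in b..1, fuv u v) (fun u => fu u 1 - fu u b) (uIcc a 1) := by
      intro u hu
      exact h3 u (uIcc_subset_Icc ha hone hu) b hb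
    rw [intervalIntegral.integral_congr e1,
      intervalIntegral.integral_sub (hII 1 hone a ha 1 hone) (hII b hb a ha 1 hone),
      h1 1 hone a ha, h1 b hb a ha]
  have hkey : ∀ a ∈ Icc (0:ℝ) 1, ∀ b ∈ Icc (0:ℝ) 1,
      f a b = f 1 1 - (∫ u in a..1, fu u 1) - (∫ v in b..1, fv 1 v)
        + ∫ u in a..1, ∫ v in b..1, fuv u v := by
    intro a ha b hb
    rw [h1 1 hone a ha, h2 1 hone b hb, h4 a ha b hb]; ring
  -- joint continuity of f on the square
  have hfC : ContinuousOn (fun p : ℝ × ℝ => f p.1 p.2) (Icc (0:ℝ) 1 ×ˢ Icc (0:ℝ) 1) := by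
    have hdist : ∀ p ∈ Icc (0:ℝ) 1 ×ˢ Icc (0:ℝ) 1, ∀ q ∈ Icc (0:ℝ) 1 ×ˢ Icc (0:ℝ) 1,
        dist (f p.1 p.2) (f q.1 q.2) ≤ (C1 + C2) * dist p q := by
      intro p hp q hq
      have d1 : f p.1 p.2 - f q.1 p.2 = ∫ u in q.1..p.1, fu u p.2 := by
        have ea := h1 p.2 hp.2 p.1 hp.1
        have eb := h1 p.2 hp.2 q.1 hq.1
        have ec : (∫ u in q.1..p.1, fu u p.2) + (∫ u in p.1..1, fu u p.2)
            = ∫ u in q.1..1, fu u p.2 :=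
          intervalIntegral.integral_add_adjacent_intervals
            (hII p.2 hp.2 q.1 hq.1 p.1 hp.1) (hII p.2 hp.2 p.1 hp.1 1 hone)
        linarith
      have d2 : f q.1 p.2 - f q.1 q.2 = ∫ v in q.2..p.2, fv q.1 v := by
        have ea := h2 q.1 hq.1 p.2 hp.2
        have eb := h2 q.1 hq.1 q.2 hq.2
        have ec : (∫ v in q.2..p.2, fv q.1 v) + (∫ v in p.2..1, fv q.1 v)
            = ∫ v in q.2..1, fv q.1 v :=
          intervalIntegral.integral_add_adjacent_intervals
            (hIIv q.1 hq.1 q.2 hq.2 p.2 hp.2) (hIIv q.1 hq.1 p.2 hp.2 1 hone)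
        linarith
      have n1 : ‖∫ u in q.1..p.1, fu u p.2‖ ≤ C1 * |p.1 - q.1| :=
        intervalIntegral.norm_integral_le_of_norm_le_const fun u hu =>
          hC1 (u, p.2) ⟨uIcc_subset_Icc hq.1 hp.1 (uIoc_subset_uIcc hu), hp.2⟩
      have n2 : ‖∫ v in q.2..p.2, fv q.1 v‖ ≤ C2 * |p.2 - q.2| :=
        intervalIntegral.norm_integral_le_of_norm_le_const fun v hv =>
          hC2 (q.1, v) ⟨hq.1, uIcc_subset_Icc hq.2 hp.2 (uIoc_subset_uIcc hv)⟩
      rw [Real.norm_eq_abs] at n1 n2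
      have hd1 : dist p.1 q.1 ≤ dist p q := by rw [Prod.dist_eq]; exact le_max_left _ _
      have hd2 : dist p.2 q.2 ≤ dist p q := by rw [Prod.dist_eq]; exact le_max_right _ _
      rw [Real.dist_eq] at hd1 hd2 ⊢
      have tri : |f p.1 p.2 - f q.1 q.2| ≤ |f p.1 p.2 - f q.1 p.2| + |f q.1 p.2 - f q.1 q.2| :=
        abs_sub_le _ _ _
      rw [d1, d2] at tri
      have hdn : 0 ≤ dist p q := dist_nonneg
      have := dist_nonneg (x := p.1) (y := q.1)
      rw [Real.dist_eq] at this
      nlinarith [abs_nonneg (p.2 - q.2), hd1, hd2]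
    have hlip : LipschitzOnWith (Real.toNNReal (C1 + C2)) (fun p : ℝ × ℝ => f p.1 p.2)
        (Icc (0:ℝ) 1 ×ˢ Icc (0:ℝ) 1) := by
      refine LipschitzOnWith.of_dist_le_mul fun p hp q hq => ?_
      rw [Real.coe_toNNReal _ (by linarith)]
      exact hdist p hp q hq
    exact hlip.continuousOn
  obtain ⟨Cf, hCf⟩ := ((isCompact_Icc : IsCompact (Icc (0:ℝ) 1)).prod (isCompact_Icc : IsCompact (Icc (0:ℝ) 1))).exists_bound_of_continuousOn hfC
  -- finiteness instances
  haveI hfin1 : IsFiniteMeasure ((volume : Measure ℝ).restrict (Ioc (0:ℝ) 1)) :=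
    ⟨by rw [Measure.restrict_apply_univ]; exact lt_top_iff_ne_top.2 hk_vol_Ioc_ne_top⟩
  haveI hfinS : IsFiniteMeasure
      ((volume : Measure (ℝ × ℝ)).restrict (Ioc (0:ℝ) 1 ×ˢ Ioc (0:ℝ) 1)) :=
    ⟨by rw [Measure.restrict_apply_univ]; exact lt_top_iff_ne_top.2 hk_vol_S_ne_top⟩
  -- measurability
  have hmfuv : AEStronglyMeasurable (fun p : ℝ × ℝ => fuv p.1 p.2)
      ((volume : Measure (ℝ × ℝ)).restrict (Ioc (0:ℝ) 1 ×ˢ Ioc (0:ℝ) 1)) :=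
    (hcuv.mono hSIcc).aestronglyMeasurable hmS
  have hmfP : AEStronglyMeasurable (fun p : ℝ × ℝ => f p.1 p.2)
      ((volume : Measure (ℝ × ℝ)).restrict (Ioc (0:ℝ) 1 ×ˢ Ioc (0:ℝ) 1)) :=
    (hfC.mono hSIcc).aestronglyMeasurable hmS
  have hmg1 : AEStronglyMeasurable (fun u => fu u 1) (volume.restrict (Ioc (0:ℝ) 1)) :=
    (hcg1.mono hIcc).aestronglyMeasurable measurableSet_Ioc
  have hmg2 : AEStronglyMeasurable (fun v => fv 1 v) (volume.restrict (Ioc (0:ℝ) 1)) :=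
    (hcg2.mono hIcc).aestronglyMeasurable measurableSet_Ioc
  -- generic integrability helpers
  have hint1 : ∀ (w g : ℝ → ℝ) (C : ℝ), Measurable w → (∀ u ∈ Ioc (0:ℝ) 1, |w u| ≤ 1) →
      AEStronglyMeasurable g (volume.restrict (Ioc (0:ℝ) 1)) →
      (∀ u ∈ Icc (0:ℝ) 1, ‖g u‖ ≤ C) →
      Integrable (fun u => w u * g u) (volume.restrict (Ioc (0:ℝ) 1)) := by
    intro w g C hw hwb hg hgb
    refine hk_int_gen hk_vol_Ioc_ne_top measurableSet_Ioc
      (hw.aestronglyMeasurable.mul hg) (C := C) fun u hu => ?_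
    rw [abs_mul]
    have e1 := hgb u (hIcc hu)
    rw [Real.norm_eq_abs] at e1
    nlinarith [abs_nonneg (g u), abs_nonneg (w u), hwb u hu]
  have hintP : ∀ (w g : ℝ × ℝ → ℝ) (C : ℝ), Measurable w →
      (∀ p ∈ Ioc (0:ℝ) 1 ×ˢ Ioc (0:ℝ) 1, |w p| ≤ 1) →
      AEStronglyMeasurable g
        ((volume : Measure (ℝ × ℝ)).restrict (Ioc (0:ℝ) 1 ×ˢ Ioc (0:ℝ) 1)) →
      (∀ p ∈ Icc (0:ℝ) 1 ×ˢ Icc (0:ℝ) 1, ‖g p‖ ≤ C) →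
      Integrable (fun p => w p * g p)
        ((volume : Measure (ℝ × ℝ)).restrict (Ioc (0:ℝ) 1 ×ˢ Ioc (0:ℝ) 1)) := by
    intro w g C hw hwb hg hgb
    refine hk_int_gen hk_vol_S_ne_top hmS (hw.aestronglyMeasurable.mul hg) (C := C) fun p hp => ?_
    rw [abs_mul]
    have e1 := hgb p (hSIcc hp)
    rw [Real.norm_eq_abs] at e1
    nlinarith [abs_nonneg (g p), abs_nonneg (w p), hwb p hp]
  -- indicator basic facts
  have hind01 : ∀ a t : ℝ, 0 ≤ hkInd a t ∧ hkInd a t ≤ 1 := by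
    intro a t; unfold hkInd; split <;> norm_num
  have hindabs : ∀ a t : ℝ, |hkInd a t| ≤ 1 := fun a t =>
    abs_le.2 ⟨by linarith [(hind01 a t).1], (hind01 a t).2⟩
  have hindPabs : ∀ (a b : ℝ) (p : ℝ × ℝ), |hkInd a p.1 * hkInd b p.2| ≤ 1 := by
    intro a b p
    calc |hkInd a p.1 * hkInd b p.2| = |hkInd a p.1| * |hkInd b p.2| := abs_mul _ _
      _ ≤ 1 * 1 := mul_le_mul (hindabs _ _) (hindabs _ _) (abs_nonneg _) zero_le_one
      _ = 1 := mul_one 1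
  have hbC1 : ∀ u ∈ Icc (0:ℝ) 1, ‖fu u 1‖ ≤ C1 := fun u hu => hC1 (u, 1) ⟨hu, hone⟩
  have hbC2 : ∀ v ∈ Icc (0:ℝ) 1, ‖fv 1 v‖ ≤ C2 := fun v hv => hC2 (1, v) ⟨hone, hv⟩
  -- J-term conversion
  have hJ : ∀ a ∈ Icc (0:ℝ) 1, ∀ b ∈ Icc (0:ℝ) 1,
      (∫ u in a..1, ∫ v in b..1, fuv u v)
        = ∫ p in Ioc (0:ℝ) 1 ×ˢ Ioc (0:ℝ) 1, (hkInd a p.1 * hkInd b p.2) * fuv p.1 p.2 := by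
    intro a ha b hb
    have hwm : Measurable (fun p : ℝ × ℝ => hkInd a p.1 * hkInd b p.2) :=
      ((hk_ind_meas_right a).comp measurable_fst).mul ((hk_ind_meas_right b).comp measurable_snd)
    have hinte : Integrable (fun p : ℝ × ℝ => (hkInd a p.1 * hkInd b p.2) * fuv p.1 p.2)
        ((volume.restrict (Ioc (0:ℝ) 1)).prod (volume.restrict (Ioc (0:ℝ) 1))) := by
      rw [hk_prod_eq]
      exact hintP _ _ C3 hwm (fun p _ => hindPabs _ _ p) hmfuv hC3
    have e1 : ∀ u : ℝ, hkInd a u * (∫ v in b..1, fuv u v)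
        = ∫ v in Ioc (0:ℝ) 1, (hkInd a u * hkInd b v) * fuv u v := by
      intro u
      rw [hk_iok (fun v => fuv u v) hb, ← integral_const_mul]
      congr 1; funext v; ring
    rw [hk_iok (fun u => ∫ v in b..1, fuv u v) ha]
    simp_rw [e1]
    rw [integral_integral (f := fun u v => (hkInd a u * hkInd b v) * fuv u v) hinte, hk_prod_eq]
  -- term identity for the sample points
  have hterm : ∀ n, f (x n).1 (x n).2
      = f 1 1 - (∫ u in Ioc (0:ℝ) 1, hkInd (x n).1 u * fu u 1)
        - (∫ v in Ioc (0:ℝ) 1, hkInd (x n).2 v * fv 1 v)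
        + ∫ p in Ioc (0:ℝ) 1 ×ˢ Ioc (0:ℝ) 1,
            (hkInd (x n).1 p.1 * hkInd (x n).2 p.2) * fuv p.1 p.2 := by
    intro n
    rw [hkey _ (hxI n).1 _ (hxI n).2, hJ _ (hxI n).1 _ (hxI n).2,
      hk_iok (fun u => fu u 1) (hxI n).1, hk_iok (fun v => fv 1 v) (hxI n).2]
  have hintn1 : ∀ n : Fin N, Integrable (fun u => hkInd (x n).1 u * fu u 1)
      (volume.restrict (Ioc (0:ℝ) 1)) :=
    fun n => hint1 _ _ C1 (hk_ind_meas_right _) (fun u _ => hindabs _ _) hmg1 hbC1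
  have hintn2 : ∀ n : Fin N, Integrable (fun v => hkInd (x n).2 v * fv 1 v)
      (volume.restrict (Ioc (0:ℝ) 1)) :=
    fun n => hint1 _ _ C2 (hk_ind_meas_right _) (fun v _ => hindabs _ _) hmg2 hbC2
  have hintnP : ∀ n : Fin N, Integrable
      (fun p : ℝ × ℝ => (hkInd (x n).1 p.1 * hkInd (x n).2 p.2) * fuv p.1 p.2)
      ((volume : Measure (ℝ × ℝ)).restrict (Ioc (0:ℝ) 1 ×ˢ Ioc (0:ℝ) 1)) :=
    fun n => hintP _ _ C3
      (((hk_ind_meas_right _).comp measurable_fst).mul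
        ((hk_ind_meas_right _).comp measurable_snd))
      (fun p _ => hindPabs _ _ p) hmfuv hC3
  have hswap1 : (∑ n, ∫ u in Ioc (0:ℝ) 1, hkInd (x n).1 u * fu u 1)
      = ∫ u in Ioc (0:ℝ) 1, (∑ n, hkInd (x n).1 u) * fu u 1 := by
    rw [← integral_finset_sum _ fun n _ => hintn1 n]
    congr 1; funext u; rw [Finset.sum_mul]
  have hswap2 : (∑ n, ∫ v in Ioc (0:ℝ) 1, hkInd (x n).2 v * fv 1 v)
      = ∫ v in Ioc (0:ℝ) 1, (∑ n, hkInd (x n).2 v) * fv 1 v := by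
    rw [← integral_finset_sum _ fun n _ => hintn2 n]
    congr 1; funext v; rw [Finset.sum_mul]
  have hswapP : (∑ n, ∫ p in Ioc (0:ℝ) 1 ×ˢ Ioc (0:ℝ) 1,
        (hkInd (x n).1 p.1 * hkInd (x n).2 p.2) * fuv p.1 p.2)
      = ∫ p in Ioc (0:ℝ) 1 ×ˢ Ioc (0:ℝ) 1,
          (∑ n, hkInd (x n).1 p.1 * hkInd (x n).2 p.2) * fuv p.1 p.2 := by
    rw [← integral_finset_sum _ fun n _ => hintnP n]
    congr 1; funext p; rw [Finset.sum_mul]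
  have hSum : (∑ n, f (x n).1 (x n).2) / N
      = f 1 1 - (∫ u in Ioc (0:ℝ) 1, ((∑ n, hkInd (x n).1 u) / N) * fu u 1)
        - (∫ v in Ioc (0:ℝ) 1, ((∑ n, hkInd (x n).2 v) / N) * fv 1 v)
        + ∫ p in Ioc (0:ℝ) 1 ×ˢ Ioc (0:ℝ) 1,
            ((∑ n, hkInd (x n).1 p.1 * hkInd (x n).2 p.2) / N) * fuv p.1 p.2 := by
    have e0 : (∑ n, f (x n).1 (x n).2)
        = N * f 1 1 - (∑ n, ∫ u in Ioc (0:ℝ) 1, hkInd (x n).1 u * fu u 1)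
          - (∑ n, ∫ v in Ioc (0:ℝ) 1, hkInd (x n).2 v * fv 1 v)
          + ∑ n, ∫ p in Ioc (0:ℝ) 1 ×ˢ Ioc (0:ℝ) 1,
              (hkInd (x n).1 p.1 * hkInd (x n).2 p.2) * fuv p.1 p.2 := by
      rw [Finset.sum_congr rfl fun n _ => hterm n]
      rw [Finset.sum_add_distrib, Finset.sum_sub_distrib, Finset.sum_sub_distrib,
        Finset.sum_const, Finset.card_univ, Fintype.card_fin, nsmul_eq_mul]
    have d1 : (∫ u in Ioc (0:ℝ) 1, (∑ n, hkInd (x n).1 u) * fu u 1) / N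
        = ∫ u in Ioc (0:ℝ) 1, ((∑ n, hkInd (x n).1 u) / N) * fu u 1 := by
      rw [← integral_div]; congr 1; funext u; ring
    have d2 : (∫ v in Ioc (0:ℝ) 1, (∑ n, hkInd (x n).2 v) * fv 1 v) / N
        = ∫ v in Ioc (0:ℝ) 1, ((∑ n, hkInd (x n).2 v) / N) * fv 1 v := by
      rw [← integral_div]; congr 1; funext v; ring
    have dP : (∫ p in Ioc (0:ℝ) 1 ×ˢ Ioc (0:ℝ) 1,
          (∑ n, hkInd (x n).1 p.1 * hkInd (x n).2 p.2) * fuv p.1 p.2) / N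
        = ∫ p in Ioc (0:ℝ) 1 ×ˢ Ioc (0:ℝ) 1,
            ((∑ n, hkInd (x n).1 p.1 * hkInd (x n).2 p.2) / N) * fuv p.1 p.2 := by
      rw [← integral_div]; congr 1; funext p; ring
    rw [e0, hswap1, hswap2, hswapP, ← d1, ← d2, ← dP]
    field_simp
  -- ===== integral side =====
  have hintfS : Integrable (fun p : ℝ × ℝ => f p.1 p.2)
      ((volume : Measure (ℝ × ℝ)).restrict (Ioc (0:ℝ) 1 ×ˢ Ioc (0:ℝ) 1)) :=
    hk_int_gen hk_vol_S_ne_top hmS hmfP (C := Cf) fun p hp => by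
      simpa [Real.norm_eq_abs] using hCf p (hSIcc hp)
  have hintf : Integrable (fun p : ℝ × ℝ => f p.1 p.2)
      ((volume.restrict (Ioc (0:ℝ) 1)).prod (volume.restrict (Ioc (0:ℝ) 1))) := by
    rw [hk_prod_eq]; exact hintfS
  have hI0 : (∫ a in (0:ℝ)..1, ∫ b in (0:ℝ)..1, f a b)
      = ∫ p in Ioc (0:ℝ) 1 ×ˢ Ioc (0:ℝ) 1, f p.1 p.2 := by
    rw [intervalIntegral.integral_of_le zero_le_one]
    rw [setIntegral_congr_fun measurableSet_Ioc
      (fun a _ => intervalIntegral.integral_of_le zero_le_one)]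
    rw [integral_integral (f := fun a b => f a b) hintf, hk_prod_eq]
  have hintA : Integrable (fun p : ℝ × ℝ => f p.1 1)
      ((volume : Measure (ℝ × ℝ)).restrict (Ioc (0:ℝ) 1 ×ˢ Ioc (0:ℝ) 1)) := by
    refine hk_int_gen hk_vol_S_ne_top hmS
      ((hcf1.comp continuous_fst.continuousOn fun p hp => hIcc hp.1).aestronglyMeasurable hmS)
      (C := Cf) fun p hp => ?_
    have := hCf (p.1, 1) ⟨hIcc hp.1, hone⟩
    rwa [Real.norm_eq_abs] at this
  have hintB : Integrable (fun p : ℝ × ℝ => f 1 p.2)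
      ((volume : Measure (ℝ × ℝ)).restrict (Ioc (0:ℝ) 1 ×ˢ Ioc (0:ℝ) 1)) := by
    refine hk_int_gen hk_vol_S_ne_top hmS
      ((hcf2.comp continuous_snd.continuousOn fun p hp => hIcc hp.2).aestronglyMeasurable hmS)
      (C := Cf) fun p hp => ?_
    have := hCf (1, p.2) ⟨hone, hIcc hp.2⟩
    rwa [Real.norm_eq_abs] at this
  have hsplit : (∫ p in Ioc (0:ℝ) 1 ×ˢ Ioc (0:ℝ) 1, f p.1 p.2)
      = f 1 1 - (∫ p in Ioc (0:ℝ) 1 ×ˢ Ioc (0:ℝ) 1, (f 1 1 - f p.1 1))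
        - (∫ p in Ioc (0:ℝ) 1 ×ˢ Ioc (0:ℝ) 1, (f 1 1 - f 1 p.2))
        + ∫ p in Ioc (0:ℝ) 1 ×ˢ Ioc (0:ℝ) 1, ((f 1 1 - f p.1 1) - (f 1 p.2 - f p.1 p.2)) := by
    have hG1 : Integrable (fun p : ℝ × ℝ => f 1 1 - f p.1 1)
        ((volume : Measure (ℝ × ℝ)).restrict (Ioc (0:ℝ) 1 ×ˢ Ioc (0:ℝ) 1)) :=
      (integrable_const _).sub hintA
    have hG2 : Integrable (fun p : ℝ × ℝ => f 1 1 - f 1 p.2)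
        ((volume : Measure (ℝ × ℝ)).restrict (Ioc (0:ℝ) 1 ×ˢ Ioc (0:ℝ) 1)) :=
      (integrable_const _).sub hintB
    have hG3 : Integrable (fun p : ℝ × ℝ => (f 1 1 - f p.1 1) - (f 1 p.2 - f p.1 p.2))
        ((volume : Measure (ℝ × ℝ)).restrict (Ioc (0:ℝ) 1 ×ˢ Ioc (0:ℝ) 1)) :=
      hG1.sub (hintB.sub hintfS)
    have e : (fun p : ℝ × ℝ => f p.1 p.2)
        = fun p : ℝ × ℝ => (f 1 1 - (f 1 1 - f p.1 1) - (f 1 1 - f 1 p.2))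
            + ((f 1 1 - f p.1 1) - (f 1 p.2 - f p.1 p.2)) := by
      funext p; ring
    have hH2 : Integrable (fun p : ℝ × ℝ => f 1 1 - (f 1 1 - f p.1 1))
        ((volume : Measure (ℝ × ℝ)).restrict (Ioc (0:ℝ) 1 ×ˢ Ioc (0:ℝ) 1)) :=
      (integrable_const _).sub hG1
    have hH1 : Integrable (fun p : ℝ × ℝ => f 1 1 - (f 1 1 - f p.1 1) - (f 1 1 - f 1 p.2))
        ((volume : Measure (ℝ × ℝ)).restrict (Ioc (0:ℝ) 1 ×ˢ Ioc (0:ℝ) 1)) :=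
      hH2.sub hG2
    rw [e, integral_add hH1 hG3, integral_sub hH2 hG2,
      integral_sub (integrable_const _) hG1, MeasureTheory.integral_const, measureReal_def, hk_vol_S_univ,
      one_smul]
  have hintfa1 : Integrable (fun a => f a 1) (volume.restrict (Ioc (0:ℝ) 1)) :=
    hk_int_gen hk_vol_Ioc_ne_top measurableSet_Ioc
      ((hcf1.mono hIcc).aestronglyMeasurable measurableSet_Ioc) (C := Cf)
      (fun a ha => by
        have := hCf (a, 1) ⟨hIcc ha, hone⟩
        rwa [Real.norm_eq_abs] at this)
  have hintfb1 : Integrable (fun b => f 1 b) (volume.restrict (Ioc (0:ℝ) 1)) :=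
    hk_int_gen hk_vol_Ioc_ne_top measurableSet_Ioc
      ((hcf2.mono hIcc).aestronglyMeasurable measurableSet_Ioc) (C := Cf)
      (fun b hb => by
        have := hCf (1, b) ⟨hone, hIcc hb⟩
        rwa [Real.norm_eq_abs] at this)
  have eA : (∫ p in Ioc (0:ℝ) 1 ×ˢ Ioc (0:ℝ) 1, (f 1 1 - f p.1 1))
      = ∫ u in Ioc (0:ℝ) 1, u * fu u 1 := by
    rw [hk_fst (fun a => f 1 1 - f a 1), integral_sub (integrable_const _) hintfa1,
      MeasureTheory.integral_const, measureReal_def, hk_vol_Ioc_univ, one_smul,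
      hk_ibp (fun a => f a 1) (fun u => fu u 1) (hfu 1 hone) hcg1]
    ring
  have eB : (∫ p in Ioc (0:ℝ) 1 ×ˢ Ioc (0:ℝ) 1, (f 1 1 - f 1 p.2))
      = ∫ v in Ioc (0:ℝ) 1, v * fv 1 v := by
    rw [hk_snd (fun b => f 1 1 - f 1 b), integral_sub (integrable_const _) hintfb1,
      MeasureTheory.integral_const, measureReal_def, hk_vol_Ioc_univ, one_smul,
      hk_ibp (fun b => f 1 b) (fun v => fv 1 v) (hfv 1 hone) hcg2]
    ring
  -- the 2-dimensional term
  have hΦ : Integrable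
      (fun z : (ℝ × ℝ) × (ℝ × ℝ) => (hkInd z.1.1 z.2.1 * hkInd z.1.2 z.2.2) * fuv z.2.1 z.2.2)
      (((volume : Measure (ℝ × ℝ)).restrict (Ioc (0:ℝ) 1 ×ˢ Ioc (0:ℝ) 1)).prod
        ((volume : Measure (ℝ × ℝ)).restrict (Ioc (0:ℝ) 1 ×ˢ Ioc (0:ℝ) 1))) := by
    rw [hk_prod_eq4]
    refine hk_int_gen hk_vol_SS_ne_top (hmS.prod hmS) ?_ (C := C3) fun z hz => ?_
    · refine (Measurable.aestronglyMeasurable ?_).mul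
        (((hcuv.mono hSIcc).comp continuous_snd.continuousOn fun z hz =>
          hz.2).aestronglyMeasurable (hmS.prod hmS))
      exact (hk_ind_meas2.comp
          ((measurable_fst.comp measurable_fst).prodMk (measurable_fst.comp measurable_snd))).mul
        (hk_ind_meas2.comp
          ((measurable_snd.comp measurable_fst).prodMk (measurable_snd.comp measurable_snd)))
    · rw [abs_mul]
      have e1 : |hkInd z.1.1 z.2.1 * hkInd z.1.2 z.2.2| ≤ 1 := by
        calc |hkInd z.1.1 z.2.1 * hkInd z.1.2 z.2.2|
            = |hkInd z.1.1 z.2.1| * |hkInd z.1.2 z.2.2| := abs_mul _ _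
          _ ≤ 1 * 1 := mul_le_mul (hindabs _ _) (hindabs _ _) (abs_nonneg _) zero_le_one
          _ = 1 := mul_one 1
      have e2 := hC3 z.2 (hSIcc hz.2)
      rw [Real.norm_eq_abs] at e2
      nlinarith [abs_nonneg (fuv z.2.1 z.2.2), abs_nonneg (hkInd z.1.1 z.2.1 * hkInd z.1.2 z.2.2)]
  have eJ : (∫ p in Ioc (0:ℝ) 1 ×ˢ Ioc (0:ℝ) 1, ((f 1 1 - f p.1 1) - (f 1 p.2 - f p.1 p.2)))
      = ∫ p in Ioc (0:ℝ) 1 ×ˢ Ioc (0:ℝ) 1, (p.1 * p.2) * fuv p.1 p.2 := by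
    rw [← setIntegral_congr_fun hmS (fun p hp => h4 p.1 (hIcc hp.1) p.2 (hIcc hp.2))]
    rw [setIntegral_congr_fun hmS (fun p hp => hJ p.1 (hIcc hp.1) p.2 (hIcc hp.2))]
    rw [integral_integral_swap
      (f := fun (p w : ℝ × ℝ) => (hkInd p.1 w.1 * hkInd p.2 w.2) * fuv w.1 w.2) hΦ]
    refine setIntegral_congr_fun hmS fun w hw => ?_
    rw [integral_mul_const, ← hk_prod_eq,
      integral_prod_mul (f := fun a => hkInd a w.1) (g := fun b => hkInd b w.2),
      hk_eval hw.1, hk_eval hw.2]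
  have hInt : (∫ a in (0:ℝ)..1, ∫ b in (0:ℝ)..1, f a b)
      = f 1 1 - (∫ u in Ioc (0:ℝ) 1, u * fu u 1) - (∫ v in Ioc (0:ℝ) 1, v * fv 1 v)
        + ∫ p in Ioc (0:ℝ) 1 ×ˢ Ioc (0:ℝ) 1, (p.1 * p.2) * fuv p.1 p.2 := by
    rw [hI0, hsplit, eA, eB, eJ]
  -- ===== discrepancy bounds for the counting functions =====
  have hNpos : (0:ℝ) < N := by exact_mod_cast hN
  have hcnt1 : ∀ u : ℝ, (∑ n, hkInd (x n).1 u)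
      = ((Finset.univ.filter fun n : Fin N =>
          (x n).1 ∈ Ico (0:ℝ) u ∧ (x n).2 ∈ Ico (0:ℝ) 1).card : ℝ) := by
    intro u
    have e : ∀ n : Fin N, hkInd (x n).1 u
        = if ((x n).1 ∈ Ico (0:ℝ) u ∧ (x n).2 ∈ Ico (0:ℝ) 1) then (1:ℝ) else 0 := by
      intro n
      unfold hkInd
      by_cases h : (x n).1 < u
      · rw [if_pos h, if_pos ⟨⟨(hx n).1.1, h⟩, (hx n).2⟩]
      · rw [if_neg h, if_neg fun hc => h hc.1.2]
    rw [Finset.sum_congr rfl fun n _ => e n, Finset.sum_boole]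
  have hcnt2 : ∀ v : ℝ, (∑ n, hkInd (x n).2 v)
      = ((Finset.univ.filter fun n : Fin N =>
          (x n).1 ∈ Ico (0:ℝ) 1 ∧ (x n).2 ∈ Ico (0:ℝ) v).card : ℝ) := by
    intro v
    have e : ∀ n : Fin N, hkInd (x n).2 v
        = if ((x n).1 ∈ Ico (0:ℝ) 1 ∧ (x n).2 ∈ Ico (0:ℝ) v) then (1:ℝ) else 0 := by
      intro n
      unfold hkInd
      by_cases h : (x n).2 < v
      · rw [if_pos h, if_pos ⟨(hx n).1, ⟨(hx n).2.1, h⟩⟩]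
      · rw [if_neg h, if_neg fun hc => h hc.2.2]
    rw [Finset.sum_congr rfl fun n _ => e n, Finset.sum_boole]
  have hcntP : ∀ p : ℝ × ℝ, (∑ n, hkInd (x n).1 p.1 * hkInd (x n).2 p.2)
      = ((Finset.univ.filter fun n : Fin N =>
          (x n).1 ∈ Ico (0:ℝ) p.1 ∧ (x n).2 ∈ Ico (0:ℝ) p.2).card : ℝ) := by
    intro p
    have e : ∀ n : Fin N, hkInd (x n).1 p.1 * hkInd (x n).2 p.2
        = if ((x n).1 ∈ Ico (0:ℝ) p.1 ∧ (x n).2 ∈ Ico (0:ℝ) p.2) then (1:ℝ) else 0 := by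
      intro n
      unfold hkInd
      by_cases h1 : (x n).1 < p.1 <;> by_cases h2 : (x n).2 < p.2
      · rw [if_pos h1, if_pos h2, if_pos ⟨⟨(hx n).1.1, h1⟩, ⟨(hx n).2.1, h2⟩⟩]; norm_num
      · rw [if_pos h1, if_neg h2, if_neg fun hc => h2 hc.2.2]; norm_num
      · rw [if_neg h1, if_pos h2, if_neg fun hc => h1 hc.1.2]; norm_num
      · rw [if_neg h1, if_neg h2, if_neg fun hc => h1 hc.1.2]; norm_num
    rw [Finset.sum_congr rfl fun n _ => e n, Finset.sum_boole]
  have hA1b : ∀ u ∈ Ioc (0:ℝ) 1,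
      |(∑ n, hkInd (x n).1 u) / N - u| ≤ starDiscrepancy2 x := by
    intro u hu
    have hb := hk_discr_bound hN x hx (hIcc hu) hone
    rw [mul_one] at hb
    rw [hcnt1 u]
    exact hb
  have hA2b : ∀ v ∈ Ioc (0:ℝ) 1,
      |(∑ n, hkInd (x n).2 v) / N - v| ≤ starDiscrepancy2 x := by
    intro v hv
    have hb := hk_discr_bound hN x hx hone (hIcc hv)
    rw [one_mul] at hb
    rw [hcnt2 v]
    exact hb
  have hAPb : ∀ p ∈ Ioc (0:ℝ) 1 ×ˢ Ioc (0:ℝ) 1,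
      |(∑ n, hkInd (x n).1 p.1 * hkInd (x n).2 p.2) / N - p.1 * p.2|
        ≤ starDiscrepancy2 x := by
    intro p hp
    rw [hcntP p]
    exact hk_discr_bound hN x hx (hIcc hp.1) (hIcc hp.2)
  -- ===== integrability for the difference integrands =====
  have hm1 : Measurable fun u : ℝ => (∑ n, hkInd (x n).1 u) / N :=
    (Finset.measurable_sum _ fun n _ => hk_ind_meas_right _).div_const _
  have hm2 : Measurable fun v : ℝ => (∑ n, hkInd (x n).2 v) / N :=
    (Finset.measurable_sum _ fun n _ => hk_ind_meas_right _).div_const _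
  have hmP : Measurable fun p : ℝ × ℝ => (∑ n, hkInd (x n).1 p.1 * hkInd (x n).2 p.2) / N :=
    (Finset.measurable_sum _ fun n _ =>
      ((hk_ind_meas_right _).comp measurable_fst).mul
        ((hk_ind_meas_right _).comp measurable_snd)).div_const _
  have hsum_bnd : ∀ (g : Fin N → ℝ), (∀ n, 0 ≤ g n ∧ g n ≤ 1) → |(∑ n, g n) / N| ≤ 1 := by
    intro g hg
    have h0 : (0:ℝ) ≤ ∑ n, g n := Finset.sum_nonneg fun n _ => (hg n).1
    have h1 : (∑ n, g n) ≤ N := by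
      calc (∑ n, g n) ≤ ∑ _n : Fin N, (1:ℝ) := Finset.sum_le_sum fun n _ => (hg n).2
        _ = N := by simp
    rw [abs_div, abs_of_nonneg h0, Nat.abs_cast, div_le_one hNpos]
    exact h1
  have hIA1 : Integrable (fun u => ((∑ n, hkInd (x n).1 u) / N) * fu u 1)
      (volume.restrict (Ioc (0:ℝ) 1)) :=
    hint1 _ _ C1 hm1 (fun u _ => hsum_bnd _ fun n => hind01 _ _) hmg1 hbC1
  have hIu1 : Integrable (fun u => u * fu u 1) (volume.restrict (Ioc (0:ℝ) 1)) :=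
    hint1 _ _ C1 measurable_id (fun u hu => abs_le.2 ⟨by linarith [hu.1], hu.2⟩) hmg1 hbC1
  have hIA2 : Integrable (fun v => ((∑ n, hkInd (x n).2 v) / N) * fv 1 v)
      (volume.restrict (Ioc (0:ℝ) 1)) :=
    hint1 _ _ C2 hm2 (fun v _ => hsum_bnd _ fun n => hind01 _ _) hmg2 hbC2
  have hIu2 : Integrable (fun v => v * fv 1 v) (volume.restrict (Ioc (0:ℝ) 1)) :=
    hint1 _ _ C2 measurable_id (fun v hv => abs_le.2 ⟨by linarith [hv.1], hv.2⟩) hmg2 hbC2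
  have hIAP : Integrable
      (fun p : ℝ × ℝ => ((∑ n, hkInd (x n).1 p.1 * hkInd (x n).2 p.2) / N) * fuv p.1 p.2)
      ((volume : Measure (ℝ × ℝ)).restrict (Ioc (0:ℝ) 1 ×ˢ Ioc (0:ℝ) 1)) :=
    hintP _ _ C3 hmP
      (fun p _ => hsum_bnd _ fun n =>
        ⟨mul_nonneg (hind01 _ _).1 (hind01 _ _).1, by
          nlinarith [hind01 (x n).1 p.1, hind01 (x n).2 p.2]⟩)
      hmfuv hC3
  have hIuP : Integrable (fun p : ℝ × ℝ => (p.1 * p.2) * fuv p.1 p.2)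
      ((volume : Measure (ℝ × ℝ)).restrict (Ioc (0:ℝ) 1 ×ˢ Ioc (0:ℝ) 1)) :=
    hintP _ _ C3 (measurable_fst.mul measurable_snd)
      (fun p hp => by
        rw [abs_mul]
        have e1 : |p.1| ≤ 1 := abs_le.2 ⟨by linarith [hp.1.1], hp.1.2⟩
        have e2 : |p.2| ≤ 1 := abs_le.2 ⟨by linarith [hp.2.1], hp.2.2⟩
        nlinarith [abs_nonneg p.1, abs_nonneg p.2])
      hmfuv hC3
  -- differences as single integrals
  have hd1 : (∫ u in Ioc (0:ℝ) 1, ((∑ n, hkInd (x n).1 u) / N) * fu u 1)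
      - (∫ u in Ioc (0:ℝ) 1, u * fu u 1)
      = ∫ u in Ioc (0:ℝ) 1, ((∑ n, hkInd (x n).1 u) / N - u) * fu u 1 := by
    rw [← integral_sub hIA1 hIu1]; congr 1; funext u; ring
  have hd2 : (∫ v in Ioc (0:ℝ) 1, ((∑ n, hkInd (x n).2 v) / N) * fv 1 v)
      - (∫ v in Ioc (0:ℝ) 1, v * fv 1 v)
      = ∫ v in Ioc (0:ℝ) 1, ((∑ n, hkInd (x n).2 v) / N - v) * fv 1 v := by
    rw [← integral_sub hIA2 hIu2]; congr 1; funext v; ring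
  have hdP : (∫ p in Ioc (0:ℝ) 1 ×ˢ Ioc (0:ℝ) 1,
        ((∑ n, hkInd (x n).1 p.1 * hkInd (x n).2 p.2) / N) * fuv p.1 p.2)
      - (∫ p in Ioc (0:ℝ) 1 ×ˢ Ioc (0:ℝ) 1, (p.1 * p.2) * fuv p.1 p.2)
      = ∫ p in Ioc (0:ℝ) 1 ×ˢ Ioc (0:ℝ) 1,
          ((∑ n, hkInd (x n).1 p.1 * hkInd (x n).2 p.2) / N - p.1 * p.2) * fuv p.1 p.2 := by
    rw [← integral_sub hIAP hIuP]; congr 1; funext p; ring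
  have hDiff : (∑ n, f (x n).1 (x n).2) / N - (∫ a in (0:ℝ)..1, ∫ b in (0:ℝ)..1, f a b)
      = (∫ p in Ioc (0:ℝ) 1 ×ˢ Ioc (0:ℝ) 1,
          ((∑ n, hkInd (x n).1 p.1 * hkInd (x n).2 p.2) / N - p.1 * p.2) * fuv p.1 p.2)
        - (∫ u in Ioc (0:ℝ) 1, ((∑ n, hkInd (x n).1 u) / N - u) * fu u 1)
        - (∫ v in Ioc (0:ℝ) 1, ((∑ n, hkInd (x n).2 v) / N - v) * fv 1 v) := by
    rw [hSum, hInt, ← hd1, ← hd2, ← hdP]; ring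
  -- integrable absolute values
  have hIdiff1 : Integrable (fun u => ((∑ n, hkInd (x n).1 u) / N - u) * fu u 1)
      (volume.restrict (Ioc (0:ℝ) 1)) :=
    (hIA1.sub hIu1).congr (ae_of_all _ fun u => by simp only [Pi.sub_apply]; ring)
  have hIdiff2 : Integrable (fun v => ((∑ n, hkInd (x n).2 v) / N - v) * fv 1 v)
      (volume.restrict (Ioc (0:ℝ) 1)) :=
    (hIA2.sub hIu2).congr (ae_of_all _ fun v => by simp only [Pi.sub_apply]; ring)
  have hIdiffP : Integrable (fun p : ℝ × ℝ =>
        ((∑ n, hkInd (x n).1 p.1 * hkInd (x n).2 p.2) / N - p.1 * p.2) * fuv p.1 p.2)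
      ((volume : Measure (ℝ × ℝ)).restrict (Ioc (0:ℝ) 1 ×ˢ Ioc (0:ℝ) 1)) :=
    (hIAP.sub hIuP).congr (ae_of_all _ fun p => by simp only [Pi.sub_apply]; ring)
  have hIabs1 : Integrable (fun u => |fu u 1|) (volume.restrict (Ioc (0:ℝ) 1)) := by
    have h := hk_int_gen hk_vol_Ioc_ne_top measurableSet_Ioc hmg1 (C := C1)
      fun u hu => by simpa [Real.norm_eq_abs] using hbC1 u (hIcc hu)
    exact h.abs
  have hIabs2 : Integrable (fun v => |fv 1 v|) (volume.restrict (Ioc (0:ℝ) 1)) := by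
    have h := hk_int_gen hk_vol_Ioc_ne_top measurableSet_Ioc hmg2 (C := C2)
      fun v hv => by simpa [Real.norm_eq_abs] using hbC2 v (hIcc hv)
    exact h.abs
  have hIg3 : Integrable (fun p : ℝ × ℝ => fuv p.1 p.2)
      ((volume : Measure (ℝ × ℝ)).restrict (Ioc (0:ℝ) 1 ×ˢ Ioc (0:ℝ) 1)) :=
    hk_int_gen hk_vol_S_ne_top hmS hmfuv (C := C3)
      fun p hp => by simpa [Real.norm_eq_abs] using hC3 p (hSIcc hp)
  have hIabs3 : Integrable (fun p : ℝ × ℝ => |fuv p.1 p.2|)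
      ((volume : Measure (ℝ × ℝ)).restrict (Ioc (0:ℝ) 1 ×ˢ Ioc (0:ℝ) 1)) := hIg3.abs
  have hD0 : 0 ≤ starDiscrepancy2 x := hk_discr_nonneg x
  -- the three bounds
  have hB1 : |∫ u in Ioc (0:ℝ) 1, ((∑ n, hkInd (x n).1 u) / N - u) * fu u 1|
      ≤ starDiscrepancy2 x * ∫ u in Ioc (0:ℝ) 1, |fu u 1| := by
    have n1 : |∫ u in Ioc (0:ℝ) 1, ((∑ n, hkInd (x n).1 u) / N - u) * fu u 1|
        ≤ ∫ u in Ioc (0:ℝ) 1, |((∑ n, hkInd (x n).1 u) / N - u) * fu u 1| := by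
      have h := norm_integral_le_integral_norm
        (f := fun u => ((∑ n, hkInd (x n).1 u) / N - u) * fu u 1)
        (μ := volume.restrict (Ioc (0:ℝ) 1))
      simp only [Real.norm_eq_abs] at h
      exact h
    refine n1.trans ?_
    have n2 : (∫ u in Ioc (0:ℝ) 1, |((∑ n, hkInd (x n).1 u) / N - u) * fu u 1|)
        ≤ ∫ u in Ioc (0:ℝ) 1, starDiscrepancy2 x * |fu u 1| :=
      setIntegral_mono_on hIdiff1.abs (hIabs1.const_mul _) measurableSet_Ioc fun u hu => by
        rw [abs_mul]; exact mul_le_mul_of_nonneg_right (hA1b u hu) (abs_nonneg _)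
    exact n2.trans (le_of_eq (integral_const_mul _ _))
  have hB2 : |∫ v in Ioc (0:ℝ) 1, ((∑ n, hkInd (x n).2 v) / N - v) * fv 1 v|
      ≤ starDiscrepancy2 x * ∫ v in Ioc (0:ℝ) 1, |fv 1 v| := by
    have n1 : |∫ v in Ioc (0:ℝ) 1, ((∑ n, hkInd (x n).2 v) / N - v) * fv 1 v|
        ≤ ∫ v in Ioc (0:ℝ) 1, |((∑ n, hkInd (x n).2 v) / N - v) * fv 1 v| := by
      have h := norm_integral_le_integral_norm
        (f := fun v => ((∑ n, hkInd (x n).2 v) / N - v) * fv 1 v)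
        (μ := volume.restrict (Ioc (0:ℝ) 1))
      simp only [Real.norm_eq_abs] at h
      exact h
    refine n1.trans ?_
    have n2 : (∫ v in Ioc (0:ℝ) 1, |((∑ n, hkInd (x n).2 v) / N - v) * fv 1 v|)
        ≤ ∫ v in Ioc (0:ℝ) 1, starDiscrepancy2 x * |fv 1 v| :=
      setIntegral_mono_on hIdiff2.abs (hIabs2.const_mul _) measurableSet_Ioc fun v hv => by
        rw [abs_mul]; exact mul_le_mul_of_nonneg_right (hA2b v hv) (abs_nonneg _)
    exact n2.trans (le_of_eq (integral_const_mul _ _))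
  have hB3 : |∫ p in Ioc (0:ℝ) 1 ×ˢ Ioc (0:ℝ) 1,
        ((∑ n, hkInd (x n).1 p.1 * hkInd (x n).2 p.2) / N - p.1 * p.2) * fuv p.1 p.2|
      ≤ starDiscrepancy2 x * ∫ p in Ioc (0:ℝ) 1 ×ˢ Ioc (0:ℝ) 1, |fuv p.1 p.2| := by
    have n1 : |∫ p in Ioc (0:ℝ) 1 ×ˢ Ioc (0:ℝ) 1,
          ((∑ n, hkInd (x n).1 p.1 * hkInd (x n).2 p.2) / N - p.1 * p.2) * fuv p.1 p.2|
        ≤ ∫ p in Ioc (0:ℝ) 1 ×ˢ Ioc (0:ℝ) 1,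
            |((∑ n, hkInd (x n).1 p.1 * hkInd (x n).2 p.2) / N - p.1 * p.2) * fuv p.1 p.2| := by
      have h := norm_integral_le_integral_norm
        (f := fun p : ℝ × ℝ =>
          ((∑ n, hkInd (x n).1 p.1 * hkInd (x n).2 p.2) / N - p.1 * p.2) * fuv p.1 p.2)
        (μ := (volume : Measure (ℝ × ℝ)).restrict (Ioc (0:ℝ) 1 ×ˢ Ioc (0:ℝ) 1))
      simp only [Real.norm_eq_abs] at h
      exact h
    refine n1.trans ?_
    have n2 : (∫ p in Ioc (0:ℝ) 1 ×ˢ Ioc (0:ℝ) 1,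
          |((∑ n, hkInd (x n).1 p.1 * hkInd (x n).2 p.2) / N - p.1 * p.2) * fuv p.1 p.2|)
        ≤ ∫ p in Ioc (0:ℝ) 1 ×ˢ Ioc (0:ℝ) 1, starDiscrepancy2 x * |fuv p.1 p.2| :=
      setIntegral_mono_on hIdiffP.abs (hIabs3.const_mul _) hmS fun p hp => by
        rw [abs_mul]; exact mul_le_mul_of_nonneg_right (hAPb p hp) (abs_nonneg _)
    exact n2.trans (le_of_eq (integral_const_mul _ _))
  -- convert the right-hand side
  have hR1 : (∫ u in (0:ℝ)..1, |fu u 1|) = ∫ u in Ioc (0:ℝ) 1, |fu u 1| :=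
    intervalIntegral.integral_of_le zero_le_one
  have hR2 : (∫ v in (0:ℝ)..1, |fv 1 v|) = ∫ v in Ioc (0:ℝ) 1, |fv 1 v| :=
    intervalIntegral.integral_of_le zero_le_one
  have hR3 : (∫ u in (0:ℝ)..1, ∫ v in (0:ℝ)..1, |fuv u v|)
      = ∫ p in Ioc (0:ℝ) 1 ×ˢ Ioc (0:ℝ) 1, |fuv p.1 p.2| := by
    rw [intervalIntegral.integral_of_le zero_le_one,
      setIntegral_congr_fun measurableSet_Ioc
        (fun u _ => intervalIntegral.integral_of_le zero_le_one),
      integral_integral (f := fun u v => |fuv u v|) (by rw [hk_prod_eq]; exact hIabs3),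
      hk_prod_eq]
  rw [hDiff, hR1, hR2, hR3]
  set D := starDiscrepancy2 x with hDdef
  set X := ∫ p in Ioc (0:ℝ) 1 ×ˢ Ioc (0:ℝ) 1,
      ((∑ n, hkInd (x n).1 p.1 * hkInd (x n).2 p.2) / N - p.1 * p.2) * fuv p.1 p.2 with hXdef
  set Y := ∫ u in Ioc (0:ℝ) 1, ((∑ n, hkInd (x n).1 u) / N - u) * fu u 1 with hYdef
  set Z := ∫ v in Ioc (0:ℝ) 1, ((∑ n, hkInd (x n).2 v) / N - v) * fv 1 v with hZdef
  set R1 := ∫ u in Ioc (0:ℝ) 1, |fu u 1| with hR1def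
  set R2 := ∫ v in Ioc (0:ℝ) 1, |fv 1 v| with hR2def
  set R3 := ∫ p in Ioc (0:ℝ) 1 ×ˢ Ioc (0:ℝ) 1, |fuv p.1 p.2| with hR3def
  have htri : |X - Y - Z| ≤ |X| + |Y| + |Z| :=
    abs_le.2 ⟨by linarith [neg_abs_le X, le_abs_self Y, le_abs_self Z],
      by linarith [le_abs_self X, neg_abs_le Y, neg_abs_le Z]⟩
  have hfin : |X| + |Y| + |Z| ≤ D * R3 + D * R1 + D * R2 :=
    add_le_add (add_le_add hB3 hB1) hB2
  have hlast : D * R3 + D * R1 + D * R2 ≤ (|f 1 1| + R1 + R2 + R3) * D := by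
    have e : (|f 1 1| + R1 + R2 + R3) * D = |f 1 1| * D + D * R1 + D * R2 + D * R3 := by ring
    rw [e]
    have := mul_nonneg (abs_nonneg (f 1 1)) hD0
    linarith
  exact le_trans htri (le_trans hfin hlast)
end

section
/- (Discrepancy of the van der Corput sequence.) For every integer base b ≥ 2 there exists a constant C_b > 0 such that for all N ≥ 2 the star discrepancy of the first N terms of the base-b van der Corput sequence (φ_b(0), φ_b(1), φ_b(2), …) in [0,1) satisfies D*_N ≤ C_b · (log N)/N. -/
open Filter MeasureTheory
open scoped Classical

/-- The base-`b` radical inverse `φ_b(n) = Σ_j a_j b^{−j−1}`, where `n = Σ_j a_j b^j` is the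
base-`b` expansion of `n` (the digit `a_j` equals `n / b^j % b`; for `b ≥ 2` all digits with
index `j > n` vanish, so summing over `j ≤ n` suffices). -/
noncomputable def radicalInverse (b n : ℕ) : ℝ :=
  ∑ j ∈ Finset.range (n + 1), ((n / b ^ j % b : ℕ) : ℝ) / (b : ℝ) ^ (j + 1)

/-- The one-dimensional star discrepancy of the first `N` terms of a sequence `x` in `[0,1)`:
`D*_N(S) = sup_{y ∈ [0,1)} | A([0,y), S|_N)/N − y |`. -/
noncomputable def starDiscrepancy1 (x : ℕ → ℝ) (N : ℕ) : ℝ :=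
  ⨆ y : Set.Ico (0 : ℝ) 1,
    |(((Finset.range N).filter (fun n => x n ∈ Set.Ico (0 : ℝ) (y : ℝ))).card : ℝ) / N
      - (y : ℝ)|

namespace VdCAux

def rev (b m r : ℕ) : ℕ := ∑ j ∈ Finset.range m, (r / b ^ j % b) * b ^ (m - 1 - j)

lemma ri_ext (b n K : ℕ) (hb : 2 ≤ b) (hK : n + 1 ≤ K) :
    radicalInverse b n = ∑ j ∈ Finset.range K, ((n / b ^ j % b : ℕ) : ℝ) / (b : ℝ) ^ (j + 1) := by
  unfold radicalInverse
  apply Finset.sum_subset (Finset.range_subset_range.2 hK)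
  intro j _ hj'
  simp only [Finset.mem_range, not_lt] at hj'
  have h1 : n < b ^ j := by
    calc n < 2 ^ n := Nat.lt_two_pow_self
    _ ≤ 2 ^ j := Nat.pow_le_pow_right (by norm_num) (by omega)
    _ ≤ b ^ j := Nat.pow_le_pow_left hb j
  rw [Nat.div_eq_of_lt h1]
  simp

lemma digit_mod (b : ℕ) {m j : ℕ} (n : ℕ) (hj : j < m) :
    n % b ^ m / b ^ j % b = n / b ^ j % b := by
  have h1 : b ^ m = b ^ j * b ^ (m - j) := by rw [← pow_add]; congr 1; omega
  rw [h1, Nat.mod_mul_right_div_self]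
  exact Nat.mod_mod_of_dvd _ (dvd_pow_self b (by omega))

lemma ri_split (b : ℕ) (hb : 2 ≤ b) (m n : ℕ) :
    radicalInverse b n
      = ((rev b m (n % b ^ m) : ℝ) + radicalInverse b (n / b ^ m)) / (b : ℝ) ^ m := by
  have hb0 : (0:ℝ) < (b:ℝ) := by positivity
  obtain ⟨K, hK1, hK2'⟩ : ∃ K, n + 1 ≤ K ∧ m + (n / b ^ m + 1) ≤ K :=
    ⟨max (n + 1) (m + (n / b ^ m + 1)), le_max_left _ _, le_max_right _ _⟩
  have hK2 : n / b ^ m + 1 ≤ K - m := Nat.le_sub_of_add_le (by rw [Nat.add_comm]; exact hK2')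
  have hmK : m ≤ K := le_trans (Nat.le_add_right m _) hK2'
  rw [ri_ext b n K hb hK1, ri_ext b (n / b ^ m) (K - m) hb hK2]
  have hsplit : ∑ j ∈ Finset.range K, ((n / b ^ j % b : ℕ) : ℝ) / (b : ℝ) ^ (j + 1)
      = (∑ j ∈ Finset.range m, ((n / b ^ j % b : ℕ) : ℝ) / (b : ℝ) ^ (j + 1))
        + ∑ j ∈ Finset.Ico m K, ((n / b ^ j % b : ℕ) : ℝ) / (b : ℝ) ^ (j + 1) := by
    rw [Finset.range_eq_Ico, ← Finset.sum_Ico_consecutive _ (Nat.zero_le m) hmK,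
      ← Finset.range_eq_Ico]
  have h2 : ∑ j ∈ Finset.Ico m K, ((n / b ^ j % b : ℕ) : ℝ) / (b : ℝ) ^ (j + 1)
      = (∑ j ∈ Finset.range (K - m), ((n / b ^ m / b ^ j % b : ℕ) : ℝ) / (b : ℝ) ^ (j + 1))
        / (b : ℝ) ^ m := by
    rw [Finset.sum_Ico_eq_sum_range, Finset.sum_div]
    apply Finset.sum_congr rfl
    intro j _
    rw [Nat.div_div_eq_div_mul, ← pow_add, div_div, ← pow_add]
    congr 2 <;> omega
  have h1 : ∑ j ∈ Finset.range m, ((n / b ^ j % b : ℕ) : ℝ) / (b : ℝ) ^ (j + 1)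
      = ((rev b m (n % b ^ m) : ℝ)) / (b : ℝ) ^ m := by
    rw [rev, Nat.cast_sum, Finset.sum_div]
    apply Finset.sum_congr rfl
    intro j hj
    simp only [Finset.mem_range] at hj
    rw [digit_mod b _ hj]
    push_cast
    rw [div_eq_div_iff (by positivity) (by positivity), mul_assoc, ← pow_add]
    congr 2
    omega
  rw [hsplit, h1, h2, ← add_div]

lemma ri_nonneg (b n : ℕ) : 0 ≤ radicalInverse b n := by
  unfold radicalInverse
  apply Finset.sum_nonneg
  intro j _
  positivity

lemma ri_lt_one (b : ℕ) (hb : 2 ≤ b) : ∀ n, radicalInverse b n < 1 := by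
  have hb0 : (0:ℝ) < (b:ℝ) := by positivity
  intro n
  induction n using Nat.strong_induction_on with
  | _ n ih =>
    rcases Nat.eq_zero_or_pos n with rfl | hn
    · unfold radicalInverse; simp
    · have h := ri_split b hb 1 n
      have hrev : rev b 1 (n % b) = n % b := by
        simp [rev, Nat.mod_mod_of_dvd]
      rw [pow_one, hrev] at h
      have h1 : radicalInverse b (n / b) < 1 := ih _ (Nat.div_lt_self hn (by omega))
      have h2 : ((n % b : ℕ) : ℝ) + 1 ≤ (b : ℝ) := by
        exact_mod_cast Nat.mod_lt n (show 0 < b by omega)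
      rw [h, div_lt_one (show (0:ℝ) < (b:ℝ) ^ 1 by positivity), pow_one]
      linarith

lemma rev_succ_low (b m r : ℕ) : rev b (m + 1) r = (r % b) * b ^ m + rev b m (r / b) := by
  rw [rev, Finset.sum_range_succ', add_comm ((r % b) * b ^ m), rev]
  congr 1
  · apply Finset.sum_congr rfl
    intro k _
    have hd : r / b ^ (k + 1) = r / b / b ^ k := by
      rw [Nat.div_div_eq_div_mul, ← pow_succ']
    rw [hd]
    congr 2
    omega
  · simp

lemma rev_lt (b m : ℕ) (hb : 2 ≤ b) (r : ℕ) : rev b m r < b ^ m := by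
  induction m generalizing r with
  | zero => simp [rev]
  | succ m ih =>
    rw [rev_succ_low]
    have h1 : r % b ≤ b - 1 := by have := Nat.mod_lt r (show 0 < b by omega); omega
    have h2 : rev b m (r / b) < b ^ m := ih _
    have h3 : (r % b) * b ^ m ≤ (b - 1) * b ^ m := Nat.mul_le_mul_right _ h1
    have h4 : (b - 1) * b ^ m + b ^ m = b * b ^ m := by
      have hb1 : b - 1 + 1 = b := by omega
      calc (b - 1) * b ^ m + b ^ m = (b - 1 + 1) * b ^ m := by ring
      _ = b * b ^ m := by rw [hb1]
    have h5 : b ^ (m + 1) = b * b ^ m := by rw [pow_succ]; ring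
    omega

lemma rev_succ_high (b m r : ℕ) (hb : 2 ≤ b) :
    rev b (m + 1) r = b * rev b m (r % b ^ m) + r / b ^ m % b := by
  rw [rev, Finset.sum_range_succ, rev, Finset.mul_sum]
  congr 1
  · apply Finset.sum_congr rfl
    intro j hj
    simp only [Finset.mem_range] at hj
    rw [digit_mod b _ hj]
    have h : b ^ (m + 1 - 1 - j) = b * b ^ (m - 1 - j) := by
      rw [← pow_succ']
      congr 1
      omega
    rw [h]
    ring
  · simp

lemma rev_rev (b m : ℕ) (hb : 2 ≤ b) : ∀ r < b ^ m, rev b m (rev b m r) = r := by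
  induction m with
  | zero =>
    intro r hr
    have : r = 0 := by simpa using hr
    subst this
    simp [rev]
  | succ m ih =>
    intro r hr
    have hbm : 0 < b ^ m := Nat.pow_pos (by omega)
    have hrm : r % b ^ m < b ^ m := Nat.mod_lt _ hbm
    have hc : r / b ^ m < b := by
      rw [Nat.div_lt_iff_lt_mul hbm]
      calc r < b ^ (m + 1) := hr
      _ = b * b ^ m := by rw [pow_succ]; ring
    have h1 := rev_succ_high b m r hb
    rw [Nat.mod_eq_of_lt hc] at h1
    rw [h1, rev_succ_low]
    have e1 : (b * rev b m (r % b ^ m) + r / b ^ m) % b = r / b ^ m := by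
      rw [Nat.mul_add_mod, Nat.mod_eq_of_lt hc]
    have e2 : (b * rev b m (r % b ^ m) + r / b ^ m) / b = rev b m (r % b ^ m) := by
      rw [Nat.mul_add_div (by omega), Nat.div_eq_of_lt hc, Nat.add_zero]
    rw [e1, e2, ih _ hrm]
    rw [mul_comm]
    exact Nat.div_add_mod r (b ^ m)

lemma mem_elem_iff (b : ℕ) (hb : 2 ≤ b) (m c n : ℕ) (hc : c < b ^ m) :
    ((c : ℝ) / (b : ℝ) ^ m ≤ radicalInverse b n ∧
      radicalInverse b n < ((c : ℝ) + 1) / (b : ℝ) ^ m) ↔ n % b ^ m = rev b m c := by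
  have hB : (0:ℝ) < (b:ℝ) ^ m := by positivity
  have h := ri_split b hb m n
  set u := rev b m (n % b ^ m) with hu
  have hf0 := ri_nonneg b (n / b ^ m)
  have hf1 := ri_lt_one b hb (n / b ^ m)
  have hmlt : n % b ^ m < b ^ m := Nat.mod_lt _ (Nat.pow_pos (by omega))
  rw [h, div_le_div_iff_of_pos_right hB, div_lt_div_iff_of_pos_right hB]
  constructor
  · rintro ⟨h1, h2⟩
    have h3 : (c:ℝ) < (u:ℝ) + 1 := by linarith
    have h4 : (u:ℝ) < (c:ℝ) + 1 := by linarith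
    have h5 : u < c + 1 := by exact_mod_cast h4
    have h6 : c < u + 1 := by exact_mod_cast h3
    have huc : u = c := by omega
    calc n % b ^ m = rev b m (rev b m (n % b ^ m)) := (rev_rev b m hb _ hmlt).symm
    _ = rev b m c := by rw [← hu, huc]
  · intro he
    have huc : u = c := by rw [hu, he, rev_rev b m hb c hc]
    rw [huc]
    constructor <;> linarith

lemma card_mod_le (N M r : ℕ) (hM : 0 < M) (hr : r < M) :
    N / M ≤ ((Finset.range N).filter (fun n => n % M = r)).card ∧
    ((Finset.range N).filter (fun n => n % M = r)).card ≤ N / M + 1 := by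
  constructor
  · have h := Finset.card_le_card_of_injOn (f := fun q => q * M + r)
      (s := Finset.range (N / M)) (t := (Finset.range N).filter (fun n => n % M = r))
      ?_ ?_
    · simpa using h
    · intro q hq
      simp only [Finset.mem_coe, Finset.mem_range] at hq
      have h1 : (q + 1) * M ≤ N := (Nat.le_div_iff_mul_le hM).mp hq
      have h2 : (q + 1) * M = q * M + M := by ring
      simp only [Finset.mem_coe, Finset.mem_filter, Finset.mem_range]
      refine ⟨by omega, ?_⟩
      rw [add_comm, Nat.add_mul_mod_self_right, Nat.mod_eq_of_lt hr]
    · intro q1 _ q2 _ h919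
      simp only at h919
      have h := Nat.add_right_cancel h919
      exact Nat.eq_of_mul_eq_mul_right hM h
  · have h := Finset.card_le_card_of_injOn (f := fun n => n / M)
      (s := (Finset.range N).filter (fun n => n % M = r))
      (t := Finset.range (N / M + 1)) ?_ ?_
    · simpa using h
    · intro n hn
      simp only [Finset.mem_coe, Finset.mem_filter, Finset.mem_range] at hn ⊢
      have := Nat.div_le_div_right (c := M) (Nat.le_of_lt hn.1)
      omega
    · intro n1 hn1 n2 hn2 h12
      simp only [Finset.mem_coe, Finset.mem_filter, Finset.mem_range] at hn1 hn2
      simp only at h12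
      have e1 := Nat.div_add_mod n1 M
      have e2 := Nat.div_add_mod n2 M
      rw [h12] at e1
      omega

lemma card_mod_near (N M r : ℕ) (hM : 0 < M) (hr : r < M) :
    |(((Finset.range N).filter (fun n => n % M = r)).card : ℝ) - (N : ℝ) / (M : ℝ)| ≤ 1 := by
  obtain ⟨hlo, hhi⟩ := card_mod_le N M r hM hr
  have hM0 : (0:ℝ) < (M:ℝ) := by exact_mod_cast hM
  have h1 : ((N / M : ℕ) : ℝ) ≤ (N:ℝ) / (M:ℝ) := Nat.cast_div_le
  have h2 : (N:ℝ) / (M:ℝ) < ((N / M : ℕ) : ℝ) + 1 := by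
    rw [div_lt_iff₀ hM0]
    have h3 : N < M * (N / M) + M := by
      have := Nat.div_add_mod N M
      have := Nat.mod_lt N hM
      omega
    calc (N:ℝ) < (M:ℝ) * ((N / M : ℕ) : ℝ) + M := by exact_mod_cast h3
    _ = (((N / M : ℕ) : ℝ) + 1) * M := by ring
  have hlo' : ((N / M : ℕ) : ℝ) ≤ ((((Finset.range N).filter (fun n => n % M = r)).card : ℕ) : ℝ) := by
    exact_mod_cast hlo
  have hhi' : ((((Finset.range N).filter (fun n => n % M = r)).card : ℕ) : ℝ) ≤ ((N / M : ℕ) : ℝ) + 1 := by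
    exact_mod_cast hhi
  rw [abs_le]
  constructor <;> linarith

lemma elem_count (b : ℕ) (hb : 2 ≤ b) (N m c : ℕ) (hc : c < b ^ m) :
    |(((Finset.range N).filter (fun n => (c : ℝ) / (b : ℝ) ^ m ≤ radicalInverse b n ∧
        radicalInverse b n < ((c : ℝ) + 1) / (b : ℝ) ^ m)).card : ℝ)
      - (N : ℝ) / (b : ℝ) ^ m| ≤ 1 := by
  have hfeq : (Finset.range N).filter (fun n => (c : ℝ) / (b : ℝ) ^ m ≤ radicalInverse b n ∧
        radicalInverse b n < ((c : ℝ) + 1) / (b : ℝ) ^ m)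
      = (Finset.range N).filter (fun n => n % b ^ m = rev b m c) := by
    apply Finset.filter_congr
    intro n _
    exact mem_elem_iff b hb m c n hc
  rw [hfeq]
  have h := card_mod_near N (b ^ m) (rev b m c) (Nat.pow_pos (by omega))
    (rev_lt b m hb c)
  have hcast : ((b ^ m : ℕ) : ℝ) = (b : ℝ) ^ m := by push_cast; ring
  rw [hcast] at h
  exact h

noncomputable def cnt (b N : ℕ) (y : ℝ) : ℕ :=
  ((Finset.range N).filter (fun n => radicalInverse b n < y)).card

lemma cnt_mono (b N : ℕ) {y z : ℝ} (hyz : y ≤ z) : cnt b N y ≤ cnt b N z := by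
  apply Finset.card_le_card
  intro n hn
  simp only [Finset.mem_filter] at hn ⊢
  exact ⟨hn.1, lt_of_lt_of_le hn.2 hyz⟩

lemma cnt_split (b N : ℕ) (y z : ℝ) (hyz : y ≤ z) :
    cnt b N z = cnt b N y +
      ((Finset.range N).filter
        (fun n => y ≤ radicalInverse b n ∧ radicalInverse b n < z)).card := by
  have key := Finset.card_filter_add_card_filter_not
    (s := (Finset.range N).filter (fun n => radicalInverse b n < z))
    (p := fun n => radicalInverse b n < y)
  have e1 : ((Finset.range N).filter (fun n => radicalInverse b n < z)).filter
      (fun n => radicalInverse b n < y) = (Finset.range N).filter (fun n => radicalInverse b n < y) := by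
    rw [Finset.filter_filter]
    apply Finset.filter_congr
    intro n _
    constructor
    · rintro ⟨_, h⟩; exact h
    · intro h; exact ⟨lt_of_lt_of_le h hyz, h⟩
  have e2 : ((Finset.range N).filter (fun n => radicalInverse b n < z)).filter
      (fun n => ¬ radicalInverse b n < y)
      = (Finset.range N).filter (fun n => y ≤ radicalInverse b n ∧ radicalInverse b n < z) := by
    rw [Finset.filter_filter]
    apply Finset.filter_congr
    intro n _
    constructor
    · rintro ⟨h1, h2⟩; exact ⟨not_lt.mp h2, h1⟩
    · rintro ⟨h1, h2⟩; exact ⟨h2, not_lt.mpr h1⟩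
  rw [e1, e2] at key
  unfold cnt
  omega

lemma main_bound (b : ℕ) (hb : 2 ≤ b) (N : ℕ) :
    ∀ m : ℕ, ∀ c : ℕ, c ≤ b ^ m →
      |(cnt b N ((c : ℝ) / (b : ℝ) ^ m) : ℝ) - (N : ℝ) * (c : ℝ) / (b : ℝ) ^ m|
        ≤ (m : ℝ) * ((b : ℝ) - 1) := by
  intro m
  induction m with
  | zero =>
    intro c hc
    rw [pow_zero] at hc
    interval_cases c
    · have hv : ((0 : ℕ) : ℝ) / (b : ℝ) ^ 0 = 0 := by norm_num
      have h0 : cnt b N (((0 : ℕ) : ℝ) / (b : ℝ) ^ 0) = 0 := by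
        rw [hv]
        unfold cnt
        rw [Finset.card_eq_zero, Finset.filter_eq_empty_iff]
        intro n _
        exact not_lt.mpr (ri_nonneg b n)
      rw [h0]
      norm_num
    · have h1 : cnt b N (((1 : ℕ) : ℝ) / (b : ℝ) ^ 0) = N := by
        unfold cnt
        rw [Finset.filter_true_of_mem, Finset.card_range]
        intro n _
        have := ri_lt_one b hb n
        norm_num
        linarith
      rw [h1]
      norm_num
  | succ m ih =>
    have hb0 : (0:ℝ) < (b:ℝ) := by positivity
    have hB : (0:ℝ) < (b:ℝ) ^ (m + 1) := by positivity
    have sub : ∀ e q : ℕ, b * q + e ≤ b ^ (m + 1) →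
        |(cnt b N (((b * q + e : ℕ) : ℝ) / (b : ℝ) ^ (m + 1)) : ℝ)
          - (N : ℝ) * ((b * q + e : ℕ) : ℝ) / (b : ℝ) ^ (m + 1)|
          ≤ (m : ℝ) * ((b : ℝ) - 1) + (e : ℝ) := by
      intro e
      induction e with
      | zero =>
        intro q hq
        have hbq : b * q ≤ b ^ (m + 1) := by omega
        have hq' : q ≤ b ^ m := by
          have h1 : b * q ≤ b * b ^ m := by rw [← pow_succ']; exact hbq
          exact Nat.le_of_mul_le_mul_left h1 (by omega)
        have hv : ((b * q + 0 : ℕ) : ℝ) / (b : ℝ) ^ (m + 1) = (q : ℝ) / (b : ℝ) ^ m := by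
          push_cast
          rw [pow_succ']
          rw [mul_comm (b:ℝ) ((b:ℝ)^m)]
          rw [add_zero, mul_comm (b:ℝ) (q:ℝ), mul_div_mul_right _ _ (ne_of_gt hb0)]
        have hv2 : (N : ℝ) * ((b * q + 0 : ℕ) : ℝ) / (b : ℝ) ^ (m + 1)
            = (N : ℝ) * (q : ℝ) / (b : ℝ) ^ m := by
          push_cast
          rw [pow_succ', add_zero]
          field_simp
        rw [hv, hv2]
        have := ih q hq'
        push_cast
        linarith [abs_nonneg ((cnt b N ((q:ℝ)/(b:ℝ)^m) : ℝ) - (N:ℝ)*(q:ℝ)/(b:ℝ)^m)]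
      | succ e ihe =>
        intro q hq
        have hqe : b * q + e < b ^ (m + 1) := by omega
        have hcast : ((b * q + (e + 1) : ℕ) : ℝ) = ((b * q + e : ℕ) : ℝ) + 1 := by
          push_cast; ring
        rw [hcast]
        have hsplit := cnt_split b N (((b * q + e : ℕ) : ℝ) / (b : ℝ) ^ (m + 1))
          ((((b * q + e : ℕ) : ℝ) + 1) / (b : ℝ) ^ (m + 1))
          ((div_le_div_iff_of_pos_right hB).mpr (by linarith))
        have helem := elem_count b hb N (m + 1) (b * q + e) hqe
        have ihq := ihe q (by omega)
        have hcnt : (cnt b N ((((b * q + e : ℕ) : ℝ) + 1) / (b : ℝ) ^ (m + 1)) : ℝ)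
            = (cnt b N (((b * q + e : ℕ) : ℝ) / (b : ℝ) ^ (m + 1)) : ℝ)
              + (((Finset.range N).filter
                  (fun n => ((b * q + e : ℕ) : ℝ) / (b : ℝ) ^ (m + 1) ≤ radicalInverse b n ∧
                    radicalInverse b n < (((b * q + e : ℕ) : ℝ) + 1) / (b : ℝ) ^ (m + 1))).card : ℝ) := by
          exact_mod_cast congrArg (Nat.cast (R := ℝ)) hsplit
        rw [hcnt]
        have hkey : (cnt b N (((b * q + e : ℕ) : ℝ) / (b : ℝ) ^ (m + 1)) : ℝ)
              + (((Finset.range N).filter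
                  (fun n => ((b * q + e : ℕ) : ℝ) / (b : ℝ) ^ (m + 1) ≤ radicalInverse b n ∧
                    radicalInverse b n < (((b * q + e : ℕ) : ℝ) + 1) / (b : ℝ) ^ (m + 1))).card : ℝ)
              - (N : ℝ) * (((b * q + e : ℕ) : ℝ) + 1) / (b : ℝ) ^ (m + 1)
            = ((cnt b N (((b * q + e : ℕ) : ℝ) / (b : ℝ) ^ (m + 1)) : ℝ)
                - (N : ℝ) * ((b * q + e : ℕ) : ℝ) / (b : ℝ) ^ (m + 1))
              + ((((Finset.range N).filter
                  (fun n => ((b * q + e : ℕ) : ℝ) / (b : ℝ) ^ (m + 1) ≤ radicalInverse b n ∧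
                    radicalInverse b n < (((b * q + e : ℕ) : ℝ) + 1) / (b : ℝ) ^ (m + 1))).card : ℝ)
                - (N : ℝ) / (b : ℝ) ^ (m + 1)) := by
          ring
        rw [hkey]
        have habs := abs_add_le ((cnt b N (((b * q + e : ℕ) : ℝ) / (b : ℝ) ^ (m + 1)) : ℝ)
                - (N : ℝ) * ((b * q + e : ℕ) : ℝ) / (b : ℝ) ^ (m + 1))
              ((((Finset.range N).filter
                  (fun n => ((b * q + e : ℕ) : ℝ) / (b : ℝ) ^ (m + 1) ≤ radicalInverse b n ∧
                    radicalInverse b n < (((b * q + e : ℕ) : ℝ) + 1) / (b : ℝ) ^ (m + 1))).card : ℝ)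
                - (N : ℝ) / (b : ℝ) ^ (m + 1))
        push_cast
        push_cast at ihq habs helem
        linarith
    intro c hc
    have hdm : b * (c / b) + c % b = c := Nat.div_add_mod c b
    have hmod : c % b < b := Nat.mod_lt c (by omega)
    have h := sub (c % b) (c / b) (by omega)
    rw [hdm] at h
    refine h.trans ?_
    have h2 : ((c % b : ℕ) : ℝ) + 1 ≤ (b : ℝ) := by exact_mod_cast hmod
    push_cast
    ring_nf
    nlinarith [h2]

end VdCAux

/-- **Discrepancy of the van der Corput sequence.** For every base `b ≥ 2` there is a constant
`C_b > 0` such that for all `N ≥ 2` the star discrepancy of the first `N` terms of the base-`b`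
van der Corput sequence `(φ_b(0), φ_b(1), φ_b(2), …)` is at most `C_b · (log N) / N`. -/
theorem van_der_Corput_starDiscrepancy_le (b : ℕ) (hb : 2 ≤ b) :
    ∃ C : ℝ, 0 < C ∧ ∀ N : ℕ, 2 ≤ N →
      starDiscrepancy1 (fun n => radicalInverse b n) N ≤ C * Real.log N / N := by
  open VdCAux in
  have hb0 : (0:ℝ) < (b:ℝ) := by positivity
  have hb1 : (2:ℝ) ≤ (b:ℝ) := by exact_mod_cast hb
  have hlogb : 0 < Real.log b := Real.log_pos (by linarith)
  have hlog2 : 0 < Real.log 2 := Real.log_pos (by norm_num)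
  refine ⟨((b:ℝ) - 1) / Real.log b + (b:ℝ) / Real.log 2, ?_, ?_⟩
  · have h1 : 0 < ((b:ℝ) - 1) / Real.log b := div_pos (by linarith) hlogb
    have h2 : 0 < (b:ℝ) / Real.log 2 := div_pos (by linarith) hlog2
    linarith
  intro N hN
  have hN0 : (0:ℝ) < (N:ℝ) := by exact_mod_cast (by omega : 0 < N)
  set m := Nat.log b N + 1 with hm
  have hNm : N < b ^ m := Nat.lt_pow_succ_log_self (by omega) N
  have hlowN : b ^ Nat.log b N ≤ N := Nat.pow_log_le_self b (by omega)
  have hBpos : (0:ℝ) < (b:ℝ) ^ m := by positivity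
  set B := (b:ℝ) ^ m with hBdef
  have hNB : (N:ℝ) ≤ B := by
    have : (N:ℝ) < ((b ^ m : ℕ) : ℝ) := by exact_mod_cast hNm
    rw [hBdef]
    push_cast at this
    linarith
  -- log bound on m
  have hL2 : Real.log 2 ≤ Real.log N :=
    Real.log_le_log (by norm_num) (by exact_mod_cast hN)
  have hmlog : ((Nat.log b N : ℕ) : ℝ) * Real.log b ≤ Real.log N := by
    have h1 : ((b ^ Nat.log b N : ℕ) : ℝ) ≤ (N:ℝ) := by exact_mod_cast hlowN
    have h2 : Real.log ((b:ℝ) ^ Nat.log b N) ≤ Real.log N := by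
      apply Real.log_le_log (by positivity)
      push_cast at h1
      linarith
    rwa [Real.log_pow] at h2
  have e1 : (m:ℝ) ≤ Real.log N / Real.log b + 1 := by
    have := (le_div_iff₀ hlogb).mpr hmlog
    push_cast [hm]
    linarith
  -- the sup
  haveI : Nonempty (Set.Ico (0:ℝ) 1) := ⟨⟨0, Set.mem_Ico.mpr ⟨le_refl 0, zero_lt_one⟩⟩⟩
  rw [starDiscrepancy1]
  apply ciSup_le
  rintro ⟨y, hy⟩
  obtain ⟨hy0, hy1⟩ := Set.mem_Ico.mp hy
  simp only
  -- identify the card with cnt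
  have hcard : ((Finset.range N).filter
      (fun n => radicalInverse b n ∈ Set.Ico (0:ℝ) y)).card = cnt b N y := by
    unfold cnt
    apply congrArg Finset.card
    apply Finset.filter_congr
    intro n _
    rw [Set.mem_Ico]
    exact ⟨fun h => h.2, fun h => ⟨ri_nonneg b n, h⟩⟩
  rw [hcard]
  -- floor approximation
  set c := ⌊B * y⌋₊ with hc
  have hc1 : (c:ℝ) ≤ B * y := Nat.floor_le (by positivity)
  have hc2 : B * y < (c:ℝ) + 1 := Nat.lt_floor_add_one _
  have hcB : c < b ^ m := by
    have h1 : (c:ℝ) < B := by nlinarith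
    have h2 : (c:ℝ) < ((b ^ m : ℕ) : ℝ) := by rw [hBdef] at h1; push_cast; linarith [h1]
    exact_mod_cast h2
  have hyc1 : (c:ℝ) / B ≤ y := (div_le_iff₀ hBpos).mpr (by linarith)
  have hyc2 : y ≤ ((c:ℝ) + 1) / B := (le_div_iff₀ hBpos).mpr (by linarith)
  have hm1 := main_bound b hb N m c (le_of_lt hcB)
  have hm2 := main_bound b hb N m (c + 1) (by omega)
  push_cast at hm1 hm2
  rw [← hBdef] at hm1 hm2
  have hcnt1 : (cnt b N ((c:ℝ) / B) : ℝ) ≤ (cnt b N y : ℝ) := by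
    exact_mod_cast cnt_mono b N hyc1
  have hcnt2 : (cnt b N y : ℝ) ≤ (cnt b N (((c:ℝ) + 1) / B) : ℝ) := by
    exact_mod_cast cnt_mono b N hyc2
  -- products
  have hp1 : (N:ℝ) * ((c:ℝ) / B) ≤ (N:ℝ) * y := mul_le_mul_of_nonneg_left hyc1 (le_of_lt hN0)
  have hp2 : (N:ℝ) * y ≤ (N:ℝ) * (((c:ℝ) + 1) / B) := mul_le_mul_of_nonneg_left hyc2 (le_of_lt hN0)
  have hq1 : (N:ℝ) * ((c:ℝ) / B) = (N:ℝ) * (c:ℝ) / B := by ring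
  have hq2 : (N:ℝ) * (((c:ℝ) + 1) / B) = (N:ℝ) * ((c:ℝ) + 1) / B := by ring
  have hdiff : (N:ℝ) * ((c:ℝ) + 1) / B - (N:ℝ) * (c:ℝ) / B = (N:ℝ) / B := by ring
  have hNB1 : (N:ℝ) / B ≤ 1 := (div_le_one hBpos).mpr hNB
  have habs1 := abs_le.mp hm1
  have habs2 := abs_le.mp hm2
  have hmcast : (m:ℝ) = ((Nat.log b N : ℕ) : ℝ) + 1 := by rw [hm]; push_cast; ring
  have hmm : (m:ℝ) * ((b:ℝ) - 1) = (((Nat.log b N : ℕ) : ℝ) + 1) * ((b:ℝ) - 1) := by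
    rw [hmcast]
  -- key bound
  have hkey : |(cnt b N y : ℝ) - (N:ℝ) * y| ≤ (m:ℝ) * ((b:ℝ) - 1) + 1 := by
    rw [abs_le]
    constructor
    · linarith [habs1.1, habs2.2, hmm]
    · linarith [habs1.1, habs2.2, hmm]
  -- divide by N
  have hdivN : |(cnt b N y : ℝ) / (N:ℝ) - y| ≤ ((m:ℝ) * ((b:ℝ) - 1) + 1) / (N:ℝ) := by
    have h1 : (cnt b N y : ℝ) / (N:ℝ) - y = ((cnt b N y : ℝ) - (N:ℝ) * y) / (N:ℝ) := by
      field_simp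
    rw [h1, abs_div, abs_of_pos hN0]
    exact (div_le_div_iff_of_pos_right hN0).mpr hkey
  refine hdivN.trans ?_
  rw [div_le_div_iff₀ hN0 hN0]
  have goal2 : (m:ℝ) * ((b:ℝ) - 1) + 1
      ≤ (((b:ℝ) - 1) / Real.log b + (b:ℝ) / Real.log 2) * Real.log N := by
    have e2 : (m:ℝ) * ((b:ℝ) - 1) ≤ (Real.log N / Real.log b + 1) * ((b:ℝ) - 1) :=
      mul_le_mul_of_nonneg_right e1 (by linarith)
    have e3 : (1:ℝ) ≤ Real.log N / Real.log 2 := (one_le_div hlog2).mpr hL2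
    have e4 : (b:ℝ) ≤ (b:ℝ) * (Real.log N / Real.log 2) :=
      le_mul_of_one_le_right (by linarith) e3
    have e5 : (((b:ℝ) - 1) / Real.log b + (b:ℝ) / Real.log 2) * Real.log N
        = (Real.log N / Real.log b) * ((b:ℝ) - 1) + (b:ℝ) * (Real.log N / Real.log 2) := by
      ring
    have e2' : (Real.log N / Real.log b + 1) * ((b:ℝ) - 1)
        = (Real.log N / Real.log b) * ((b:ℝ) - 1) + ((b:ℝ) - 1) := by ring
    rw [e5]
    linarith [e2, e2', e4]
  have hfin := mul_le_mul_of_nonneg_right goal2 (le_of_lt hN0)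
  linarith
end
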